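/- arXiv:math/0703012 — 3 statements merged into one kernel-verified Lean document; each statement's English description precedes it below -/
import Mathlib

section
/- (Atomic estimate for 𝓜_R) Let X be a Banach space and suppose 𝓜_R : L^p(ℝⁿ; X) → L^p(ℝⁿ; ℒ(ℓ²(Δ), Rad(X))) is bounded for some p ∈ (1,∞). Let a be a dyadic X-valued atom: supp a ⊆ Q for a dyadic cube Q, ‖a‖_∞ ≤ |Q|^{−1}, and ∫ a(x) dx = 0. Then ‖𝓜_R a‖_{L¹(ℝⁿ; ℒ(ℓ², Rad(X)))} ≲ 1, with constant independent of the atom. Consequently 𝓜_R is bounded from the dyadic atomic H¹(ℝⁿ; X) to L¹. -/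
open MeasureTheory
open scoped ENNReal

noncomputable section

/-- Expectation `E‖∑_{i∈s} ε_i f i‖` over independent random signs indexed by the finset `s`. -/
def radE {ι X : Type*} [DecidableEq ι] [NormedAddCommGroup X]
    (s : Finset ι) (f : ι → X) : ℝ :=
  ((2 : ℝ) ^ s.card)⁻¹ *
    ∑ σ : {i // i ∈ s} → Bool, ‖∑ i : {i // i ∈ s}, (if σ i then f i.1 else - f i.1)‖

/-- The dyadic cube of side `2^k` indexed by `m ∈ ℤⁿ`, i.e. `2^k([0,1)ⁿ + m)`. -/
def dyadicCube (n : ℕ) (k : ℤ) (m : Fin n → ℤ) : Set (Fin n → ℝ) :=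
  {x | ∀ i, (2 : ℝ) ^ k * (m i : ℝ) ≤ x i ∧ x i < (2 : ℝ) ^ k * ((m i : ℝ) + 1)}

/-- The integral average `⟨u⟩_S = |S|⁻¹ ∫_S u` of a vector-valued function over a set. -/
def setAvg (n : ℕ) {X : Type*} [NormedAddCommGroup X] [NormedSpace ℝ X]
    (S : Set (Fin n → ℝ)) (u : (Fin n → ℝ) → X) : X :=
  ((volume S).toReal)⁻¹ • ∫ y in S, u y

/-- `A_{2^k} u (x)`: the average of `u` over the dyadic cube of side `2^k` containing `x`. -/
def dyadicAvg (n : ℕ) {X : Type*} [NormedAddCommGroup X] [NormedSpace ℝ X]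
    (u : (Fin n → ℝ) → X) (k : ℤ) (x : Fin n → ℝ) : X :=
  setAvg n (dyadicCube n k (fun i => ⌊x i / (2 : ℝ) ^ k⌋)) u

/-- The Rademacher maximal function
`M_R u (x) = sup { E‖∑_k ε_k λ_k A_{2^k}u(x)‖ : λ finitely nonzero, ‖λ‖_{ℓ²} ≤ 1 }`. -/
def rademacherMaximal (n : ℕ) {X : Type*} [NormedAddCommGroup X] [NormedSpace ℝ X]
    (u : (Fin n → ℝ) → X) (x : Fin n → ℝ) : ℝ :=
  ⨆ p : {p : Finset ℤ × (ℤ → ℝ) // ∑ k ∈ p.1, (p.2 k) ^ 2 ≤ 1},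
    radE p.1.1 (fun k => p.1.2 k • dyadicAvg n u k x)

/-- The dyadic Hardy–Littlewood maximal function `M u (x) = sup_{Q ∋ x} ‖⟨u⟩_Q‖`. -/
def dyadicMaximal (n : ℕ) {X : Type*} [NormedAddCommGroup X] [NormedSpace ℝ X]
    (u : (Fin n → ℝ) → X) (x : Fin n → ℝ) : ℝ :=
  ⨆ k : ℤ, ‖dyadicAvg n u k x‖

set_option linter.unusedSectionVars false
set_option linter.unnecessarySeqFocus false
section radE
variable {ι X : Type*} [DecidableEq ι] [NormedAddCommGroup X] [NormedSpace ℝ X]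

lemma radE_card (s : Finset ι) : Fintype.card ({i // i ∈ s} → Bool) = 2 ^ s.card := by
  rw [Fintype.card_fun, Fintype.card_bool, Fintype.card_coe]

lemma radE_nonneg (s : Finset ι) (f : ι → X) : 0 ≤ radE s f :=
  mul_nonneg (by positivity) (Finset.sum_nonneg fun _ _ => norm_nonneg _)

lemma radE_congr {s : Finset ι} {f g : ι → X} (h : ∀ i ∈ s, f i = g i) :
    radE s f = radE s g := by
  unfold radE
  congr 1
  refine Finset.sum_congr rfl fun σ _ => ?_
  congr 1
  exact Finset.sum_congr rfl fun i _ => by rw [h i.1 i.2]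

lemma radE_zero (s : Finset ι) : radE s (fun _ => (0 : X)) = 0 := by
  simp [radE]

lemma radE_le_sum (s : Finset ι) (f : ι → X) : radE s f ≤ ∑ i ∈ s, ‖f i‖ := by
  unfold radE
  rw [inv_mul_le_iff₀ (by positivity)]
  calc ∑ σ : {i // i ∈ s} → Bool, ‖∑ i : {i // i ∈ s}, (if σ i then f i.1 else - f i.1)‖
      ≤ ∑ _σ : {i // i ∈ s} → Bool, ∑ i ∈ s, ‖f i‖ := by
        refine Finset.sum_le_sum fun σ _ => ?_
        calc ‖∑ i : {i // i ∈ s}, (if σ i then f i.1 else - f i.1)‖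
            ≤ ∑ i : {i // i ∈ s}, ‖(if σ i then f i.1 else - f i.1)‖ := norm_sum_le _ _
          _ = ∑ i : {i // i ∈ s}, ‖f i.1‖ := by
              refine Finset.sum_congr rfl fun i _ => ?_
              by_cases h : σ i <;> simp [h]
          _ = ∑ i ∈ s, ‖f i‖ := Finset.sum_coe_sort s fun i => ‖f i‖
    _ = (2 : ℝ) ^ s.card * ∑ i ∈ s, ‖f i‖ := by
        rw [Finset.sum_const, Finset.card_univ, radE_card, nsmul_eq_mul]
        push_cast
        ring

lemma radE_add_le (s : Finset ι) (f g : ι → X) :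
    radE s (fun i => f i + g i) ≤ radE s f + radE s g := by
  unfold radE
  rw [← mul_add]
  refine mul_le_mul_of_nonneg_left ?_ (by positivity)
  rw [← Finset.sum_add_distrib]
  refine Finset.sum_le_sum fun σ _ => ?_
  calc ‖∑ i : {i // i ∈ s}, (if σ i then f i.1 + g i.1 else -(f i.1 + g i.1))‖
      = ‖(∑ i : {i // i ∈ s}, (if σ i then f i.1 else - f i.1)) +
          (∑ i : {i // i ∈ s}, (if σ i then g i.1 else - g i.1))‖ := by
        rw [← Finset.sum_add_distrib]
        congr 1
        refine Finset.sum_congr rfl fun i _ => ?_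
        by_cases h : σ i <;> simp [h] <;> abel
    _ ≤ _ := norm_add_le _ _

lemma radE_smul (s : Finset ι) (c : ℝ) (f : ι → X) :
    radE s (fun i => c • f i) = |c| * radE s f := by
  unfold radE
  rw [mul_left_comm]
  congr 1
  rw [Finset.mul_sum]
  refine Finset.sum_congr rfl fun σ _ => ?_
  have h1 : (∑ i : {i // i ∈ s}, (if σ i then c • f i.1 else -(c • f i.1)))
      = c • ∑ i : {i // i ∈ s}, (if σ i then f i.1 else - f i.1) := by
    rw [Finset.smul_sum]
    refine Finset.sum_congr rfl fun i _ => ?_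
    by_cases h : σ i <;> simp [h]
  rw [h1, norm_smul, Real.norm_eq_abs]

lemma radE_sum_le {κ : Type*} (s : Finset ι) (t : Finset κ) (F : κ → ι → X) :
    radE s (fun i => ∑ j ∈ t, F j i) ≤ ∑ j ∈ t, radE s (F j) := by
  classical
  induction t using Finset.cons_induction with
  | empty => simp [radE_zero]
  | cons j t hj ih =>
      simp only [Finset.sum_cons]
      calc radE s (fun i => F j i + ∑ j' ∈ t, F j' i)
          ≤ radE s (F j) + radE s (fun i => ∑ j' ∈ t, F j' i) := radE_add_le s _ _
        _ ≤ _ := add_le_add_right ih _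

end radE
section khintchine
variable {ι X : Type*} [DecidableEq ι] [NormedAddCommGroup X] [NormedSpace ℝ X]

private lemma sign_orth (s : Finset ι) (i j : {i // i ∈ s}) (hij : i ≠ j) :
    ∑ σ : {i // i ∈ s} → Bool,
      ((if σ i then (1:ℝ) else -1) * (if σ j then (1:ℝ) else -1)) = 0 := by
  classical
  have hinv : Function.Involutive
      (fun σ : {i // i ∈ s} → Bool => Function.update σ i (!σ i)) := by
    intro σ
    funext k
    by_cases h : k = i
    · subst h; simp
    · simp [Function.update_of_ne h]
  set F : ({i // i ∈ s} → Bool) → ℝ := fun σ =>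
    ((if σ i then (1:ℝ) else -1) * (if σ j then (1:ℝ) else -1)) with hF
  have hsum : ∑ σ, F σ = ∑ σ, -(F σ) := by
    refine Fintype.sum_bijective _ hinv.bijective F (fun σ => -(F σ)) fun σ => ?_
    rw [hF]
    simp only
    have h1 : (Function.update σ i (!σ i)) i = !σ i := by simp
    have h2 : (Function.update σ i (!σ i)) j = σ j := Function.update_of_ne hij.symm _ _
    rw [h1, h2]
    by_cases h : σ i <;> by_cases h' : σ j <;> simp [h, h']
  rw [Finset.sum_neg_distrib] at hsum
  linarith

private lemma sum_sq_signs (s : Finset ι) (μ : ι → ℝ) :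
    ∑ σ : {i // i ∈ s} → Bool,
      (∑ i : {i // i ∈ s}, (if σ i then (1:ℝ) else -1) * μ i.1) ^ 2
      = 2 ^ s.card * ∑ i ∈ s, μ i ^ 2 := by
  classical
  have expand : ∀ σ : {i // i ∈ s} → Bool,
      (∑ i : {i // i ∈ s}, (if σ i then (1:ℝ) else -1) * μ i.1) ^ 2
        = ∑ i : {i // i ∈ s}, ∑ j : {i // i ∈ s},
            (μ i.1 * μ j.1) * ((if σ i then (1:ℝ) else -1) * (if σ j then (1:ℝ) else -1)) := by
    intro σ
    rw [sq, Finset.sum_mul_sum]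
    exact Finset.sum_congr rfl fun i _ => Finset.sum_congr rfl fun j _ => by ring
  rw [Finset.sum_congr rfl (fun σ _ => expand σ)]
  rw [Finset.sum_comm]
  have inner : ∀ i : {i // i ∈ s},
      (∑ σ : {i // i ∈ s} → Bool, ∑ j : {i // i ∈ s},
        (μ i.1 * μ j.1) * ((if σ i then (1:ℝ) else -1) * (if σ j then (1:ℝ) else -1)))
      = 2 ^ s.card * μ i.1 ^ 2 := by
    intro i
    rw [Finset.sum_comm]
    rw [Finset.sum_eq_single i]
    · have : ∀ σ : {i // i ∈ s} → Bool,
          (μ i.1 * μ i.1) * ((if σ i then (1:ℝ) else -1) * (if σ i then (1:ℝ) else -1))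
            = μ i.1 ^ 2 := by
        intro σ; by_cases h : σ i <;> simp [h] <;> ring
      rw [Finset.sum_congr rfl (fun σ _ => this σ), Finset.sum_const, Finset.card_univ,
        radE_card, nsmul_eq_mul]
      push_cast
      ring
    · intro j _ hji
      rw [← Finset.mul_sum, sign_orth s i j (Ne.symm hji), mul_zero]
    · intro h
      exact absurd (Finset.mem_univ i) h
  rw [Finset.sum_congr rfl (fun i _ => inner i), ← Finset.mul_sum]
  congr 1
  exact Finset.sum_coe_sort s fun i => μ i ^ 2

lemma radE_parallel_le (s : Finset ι) (μ : ι → ℝ) (w : X) :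
    radE s (fun i => μ i • w) ≤ Real.sqrt (∑ i ∈ s, μ i ^ 2) * ‖w‖ := by
  classical
  unfold radE
  have h1 : ∀ σ : {i // i ∈ s} → Bool,
      ‖∑ i : {i // i ∈ s}, (if σ i then μ i.1 • w else -(μ i.1 • w))‖
        = |∑ i : {i // i ∈ s}, (if σ i then (1:ℝ) else -1) * μ i.1| * ‖w‖ := by
    intro σ
    have h2 : (∑ i : {i // i ∈ s}, (if σ i then μ i.1 • w else -(μ i.1 • w)))
        = (∑ i : {i // i ∈ s}, (if σ i then (1:ℝ) else -1) * μ i.1) • w := by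
      rw [Finset.sum_smul]
      refine Finset.sum_congr rfl fun i _ => ?_
      by_cases h : σ i <;> simp [h]
    rw [h2, norm_smul, Real.norm_eq_abs]
  rw [Finset.sum_congr rfl (fun σ _ => h1 σ), ← Finset.sum_mul, ← mul_assoc]
  refine mul_le_mul_of_nonneg_right ?_ (norm_nonneg w)
  rw [inv_mul_le_iff₀ (by positivity)]
  set Z := fun σ : {i // i ∈ s} → Bool => ∑ i : {i // i ∈ s}, (if σ i then (1:ℝ) else -1) * μ i.1
  have habs : 0 ≤ ∑ σ, |Z σ| := Finset.sum_nonneg fun _ _ => abs_nonneg _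
  have hsq : (∑ σ, |Z σ|) ^ 2 ≤ ((2:ℝ) ^ s.card) ^ 2 * ∑ i ∈ s, μ i ^ 2 := by
    calc (∑ σ, |Z σ|) ^ 2 ≤ (Finset.univ.card : ℝ) * ∑ σ, |Z σ| ^ 2 :=
          sq_sum_le_card_mul_sum_sq
      _ = (2:ℝ) ^ s.card * ∑ σ, Z σ ^ 2 := by
          rw [Finset.card_univ, radE_card]
          push_cast
          congr 1
          exact Finset.sum_congr rfl fun σ _ => sq_abs _
      _ = ((2:ℝ) ^ s.card) ^ 2 * ∑ i ∈ s, μ i ^ 2 := by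
          rw [sum_sq_signs]
          push_cast
          ring
  have hs := Real.sqrt_le_sqrt hsq
  rw [Real.sqrt_sq habs, Real.sqrt_mul (sq_nonneg _), Real.sqrt_sq (by positivity)] at hs
  exact hs

end khintchine
section dyadic
variable {n : ℕ}

lemma two_zpow_pos (k : ℤ) : (0:ℝ) < (2:ℝ) ^ k := zpow_pos (by norm_num) k

/-- floor vector at scale `k`. -/
def fv (n : ℕ) (k : ℤ) (x : Fin n → ℝ) : Fin n → ℤ := fun i => ⌊x i / (2:ℝ) ^ k⌋

lemma mem_dyadicCube_iff {k : ℤ} {m : Fin n → ℤ} {x : Fin n → ℝ} :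
    x ∈ dyadicCube n k m ↔ ∀ i, ⌊x i / (2:ℝ) ^ k⌋ = m i := by
  unfold dyadicCube
  simp only [Set.mem_setOf_eq]
  refine forall_congr' fun i => ?_
  have hpos := two_zpow_pos k
  rw [Int.floor_eq_iff]
  constructor
  · rintro ⟨h1, h2⟩
    constructor
    · rw [le_div_iff₀ hpos]; linarith
    · rw [div_lt_iff₀ hpos]; push_cast; linarith
  · rintro ⟨h1, h2⟩
    rw [le_div_iff₀ hpos] at h1
    rw [div_lt_iff₀ hpos] at h2
    push_cast at h2
    constructor <;> linarith

lemma mem_dyadicCube_self (k : ℤ) (x : Fin n → ℝ) : x ∈ dyadicCube n k (fv n k x) :=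
  mem_dyadicCube_iff.2 fun _ => rfl

lemma fv_eq_of_mem {k : ℤ} {m : Fin n → ℤ} {x : Fin n → ℝ} (h : x ∈ dyadicCube n k m) :
    fv n k x = m :=
  funext (mem_dyadicCube_iff.1 h)

lemma floor_div_pow (a : ℝ) (d : ℕ) : ⌊a / 2 ^ d⌋ = ⌊a⌋ / ((2:ℤ) ^ d) := by
  have hb : (0:ℤ) < 2 ^ d := by positivity
  have hbR : (0:ℝ) < 2 ^ d := by positivity
  set q : ℤ := ⌊a⌋ / 2 ^ d with hq
  have hde : (2:ℤ) ^ d * q + ⌊a⌋ % 2 ^ d = ⌊a⌋ := Int.mul_ediv_add_emod ⌊a⌋ (2 ^ d)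
  have hr0 : 0 ≤ ⌊a⌋ % 2 ^ d := Int.emod_nonneg ⌊a⌋ (by positivity)
  have hr1 : ⌊a⌋ % 2 ^ d < 2 ^ d := Int.emod_lt_of_pos ⌊a⌋ hb
  rw [Int.floor_eq_iff]
  have hfl : (⌊a⌋ : ℝ) ≤ a := Int.floor_le a
  have hfu : a < ⌊a⌋ + 1 := Int.lt_floor_add_one a
  constructor
  · rw [le_div_iff₀ hbR]
    have : (2:ℤ) ^ d * q ≤ ⌊a⌋ := by linarith
    have h2 : ((2:ℤ) ^ d * q : ℝ) ≤ (⌊a⌋ : ℝ) := by exact_mod_cast Int.cast_le.2 this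
    push_cast at h2 ⊢
    linarith
  · rw [div_lt_iff₀ hbR]
    have : ⌊a⌋ + 1 ≤ (2:ℤ) ^ d * (q + 1) := by nlinarith [hde, hr1]
    have h2 : ((⌊a⌋ + 1 : ℤ) : ℝ) ≤ ((2:ℤ) ^ d * (q + 1) : ℤ) := Int.cast_le.2 this
    push_cast at h2 ⊢
    linarith

lemma fv_scale {k k' : ℤ} (h : k ≤ k') (x : Fin n → ℝ) :
    fv n k' x = fun i => fv n k x i / ((2:ℤ) ^ (k' - k).toNat) := by
  funext i
  unfold fv
  have hd : ((k' - k).toNat : ℤ) = k' - k := Int.toNat_of_nonneg (by omega)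
  have h2 : (2:ℝ) ^ k' = (2:ℝ) ^ k * 2 ^ (k' - k).toNat := by
    rw [← zpow_natCast (2:ℝ) (k' - k).toNat, hd, ← zpow_add₀ (by norm_num : (2:ℝ) ≠ 0)]
    ring_nf
  rw [h2, ← div_div]
  exact floor_div_pow _ _

lemma fv_congr_scale {k k' : ℤ} (h : k ≤ k') {x y : Fin n → ℝ}
    (hxy : fv n k y = fv n k x) : fv n k' y = fv n k' x := by
  rw [fv_scale h, fv_scale h, hxy]

lemma dyadicCube_subset {k k' : ℤ} (h : k ≤ k') (x : Fin n → ℝ) :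
    dyadicCube n k (fv n k x) ⊆ dyadicCube n k' (fv n k' x) := by
  intro y hy
  have h1 : fv n k y = fv n k x := fv_eq_of_mem hy
  exact mem_dyadicCube_iff.2 fun i => congrFun (fv_congr_scale h h1) i

lemma dyadicCube_eq_pi (k : ℤ) (m : Fin n → ℤ) :
    dyadicCube n k m =
      Set.pi Set.univ (fun i => Set.Ico ((2:ℝ)^k * m i) ((2:ℝ)^k * (m i + 1))) := by
  ext x
  simp [dyadicCube, Set.mem_pi, Set.mem_Ico]

lemma measurableSet_dyadicCube (k : ℤ) (m : Fin n → ℤ) :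
    MeasurableSet (dyadicCube n k m) := by
  rw [dyadicCube_eq_pi]
  exact MeasurableSet.univ_pi fun i => measurableSet_Ico

lemma volume_dyadicCube (k : ℤ) (m : Fin n → ℤ) :
    volume (dyadicCube n k m) = (ENNReal.ofReal ((2:ℝ) ^ k)) ^ n := by
  rw [dyadicCube_eq_pi, volume_pi_pi]
  have : ∀ i : Fin n, volume (Set.Ico ((2:ℝ)^k * m i) ((2:ℝ)^k * (m i + 1)))
      = ENNReal.ofReal ((2:ℝ) ^ k) := by
    intro i
    rw [Real.volume_Ico]
    congr 1
    ring
  rw [Finset.prod_congr rfl (fun i _ => this i), Finset.prod_const, Finset.card_univ,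
    Fintype.card_fin]

lemma volume_dyadicCube_ne_zero (k : ℤ) (m : Fin n → ℤ) :
    volume (dyadicCube n k m) ≠ 0 := by
  rw [volume_dyadicCube]
  exact pow_ne_zero _ (by simp [ENNReal.ofReal_eq_zero, not_le, two_zpow_pos k])

lemma volume_dyadicCube_ne_top (k : ℤ) (m : Fin n → ℤ) :
    volume (dyadicCube n k m) ≠ ⊤ := by
  rw [volume_dyadicCube]
  exact ENNReal.pow_ne_top ENNReal.ofReal_ne_top

lemma volume_dyadicCube_toReal_pos (k : ℤ) (m : Fin n → ℤ) :
    0 < (volume (dyadicCube n k m)).toReal :=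
  ENNReal.toReal_pos (volume_dyadicCube_ne_zero k m) (volume_dyadicCube_ne_top k m)

end dyadic
section measurability

lemma stronglyMeasurable_comp_countable {α γ X : Type*} [MeasurableSpace α]
    [NormedAddCommGroup X] [Countable γ] [MeasurableSpace γ] [MeasurableSingletonClass γ]
    (g : γ → X) (Φ : α → γ) (hΦ : Measurable Φ) :
    MeasureTheory.StronglyMeasurable (fun a => g (Φ a)) := by
  classical
  letI : Encodable γ := Encodable.ofCountable γ
  refine ⟨fun m => MeasureTheory.SimpleFunc.comp
    ⟨fun c => if Encodable.encode c ≤ m then g c else 0, fun _ => .of_discrete, ?_⟩ Φ hΦ, ?_⟩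
  · have h1 : (Set.range fun c => if Encodable.encode c ≤ m then g c else 0)
        ⊆ insert 0 (g '' {c | Encodable.encode c ≤ m}) := by
      rintro - ⟨c, rfl⟩
      by_cases h : Encodable.encode c ≤ m
      · exact Set.mem_insert_of_mem _ ⟨c, h, by simp only []; rw [if_pos h]⟩
      · simp only []
        rw [if_neg h]
        exact Set.mem_insert _ _
    have h2 : ({c : γ | Encodable.encode c ≤ m}).Finite :=
      Set.Finite.preimage Encodable.encode_injective.injOn (Set.finite_Iic m)
    exact Set.Finite.subset ((h2.image g).insert 0) h1
  · intro a
    refine Filter.Tendsto.congr' ?_ tendsto_const_nhds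
    rw [Filter.EventuallyEq, Filter.eventually_atTop]
    exact ⟨Encodable.encode (Φ a), fun m hm => by
      simp only [MeasureTheory.SimpleFunc.coe_comp, MeasureTheory.SimpleFunc.coe_mk,
        Function.comp_apply]
      rw [if_pos hm]⟩

variable {n : ℕ} {X : Type*} [NormedAddCommGroup X] [NormedSpace ℝ X]

lemma measurable_fv (k : ℤ) : Measurable (fv n k) := by
  refine measurable_pi_lambda _ fun i => Measurable.floor ?_
  exact (measurable_pi_apply i).div_const _

lemma stronglyMeasurable_dyadicAvg (a : (Fin n → ℝ) → X) (c : ℤ) :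
    MeasureTheory.StronglyMeasurable (dyadicAvg n a c) :=
  stronglyMeasurable_comp_countable (fun mm => setAvg n (dyadicCube n c mm) a)
    (fv n c) (measurable_fv c)

/-- truncated index set -/
def PIdx (K : ℕ) : Type :=
  {q : Finset ℤ × (ℤ → ℝ) // (∑ k ∈ q.1, (q.2 k) ^ 2 ≤ 1) ∧ q.1 ⊆ Finset.Icc (-(K:ℤ)) K}

instance (K : ℕ) : Nonempty (PIdx K) := ⟨⟨(∅, fun _ => 0), by simp⟩⟩

/-- truncated ENNReal-valued Rademacher maximal function -/
def TK (n : ℕ) {X : Type*} [NormedAddCommGroup X] [NormedSpace ℝ X] (K : ℕ)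
    (u : (Fin n → ℝ) → X) (x : Fin n → ℝ) : ℝ≥0∞ :=
  ⨆ q : PIdx K, ENNReal.ofReal (radE q.1.1 (fun k => q.1.2 k • dyadicAvg n u k x))

/-- full ENNReal-valued Rademacher maximal function -/
def Tfull (n : ℕ) {X : Type*} [NormedAddCommGroup X] [NormedSpace ℝ X]
    (u : (Fin n → ℝ) → X) (x : Fin n → ℝ) : ℝ≥0∞ :=
  ⨆ K : ℕ, TK n K u x

lemma measurable_TK (K : ℕ) (u : (Fin n → ℝ) → X) : Measurable (TK n K u) := by
  classical
  set γ := (↥(Finset.Icc (-(K:ℤ)) K)) → (Fin n → ℤ) with hγ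
  set Φ : (Fin n → ℝ) → γ := fun x k => fv n k.1 x with hΦ
  have hΦm : Measurable Φ := measurable_pi_lambda _ fun k => measurable_fv k.1
  set Ψ : γ → ℝ≥0∞ := fun c => ⨆ q : PIdx K, ENNReal.ofReal (radE q.1.1
    (fun k => q.1.2 k • (if h : k ∈ Finset.Icc (-(K:ℤ)) K
      then setAvg n (dyadicCube n k (c ⟨k, h⟩)) u else 0))) with hΨ
  have key : TK n K u = fun x => Ψ (Φ x) := by
    funext x
    refine iSup_congr fun q => ?_
    congr 1
    refine radE_congr fun k hk => ?_
    have hmem : k ∈ Finset.Icc (-(K:ℤ)) K := q.2.2 hk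
    rw [dif_pos hmem]
    rfl
  rw [key]
  exact (measurable_of_countable Ψ).comp hΦm

lemma measurable_Tfull (u : (Fin n → ℝ) → X) : Measurable (Tfull n u) :=
  Measurable.iSup fun K => measurable_TK K u

end measurability
section integrals
variable {n : ℕ} {X : Type*} [NormedAddCommGroup X] [NormedSpace ℝ X] [CompleteSpace X]

lemma isFiniteMeasure_restrict_of {S : Set (Fin n → ℝ)} (h : volume S ≠ ⊤) :
    IsFiniteMeasure (volume.restrict S) :=
  ⟨by rwa [Measure.restrict_apply_univ, lt_top_iff_ne_top]⟩

omit [CompleteSpace X] in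
lemma integrableOn_of_memLp {p : ℝ} (hp : 1 < p) {a : (Fin n → ℝ) → X}
    (ha : MemLp a (ENNReal.ofReal p) volume) {S : Set (Fin n → ℝ)}
    (hfin : volume S ≠ ⊤) : IntegrableOn a S volume := by
  have h1 : MemLp a (ENNReal.ofReal p) (volume.restrict S) := ha.restrict S
  haveI := isFiniteMeasure_restrict_of (n := n) hfin
  refine memLp_one_iff_integrable.1 (h1.mono_exponent ?_)
  rw [show (1 : ℝ≥0∞) = ENNReal.ofReal 1 by simp]
  exact ENNReal.ofReal_le_ofReal hp.le

omit [CompleteSpace X] in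
lemma integrable_of_atom {p : ℝ} (hp : 1 < p) {a : (Fin n → ℝ) → X}
    (ha : MemLp a (ENNReal.ofReal p) volume) {kQ : ℤ} {mQ : Fin n → ℤ}
    (hsupp : Function.support a ⊆ dyadicCube n kQ mQ) : Integrable a volume := by
  rw [← integrableOn_univ]
  rw [show (Set.univ : Set (Fin n → ℝ)) = dyadicCube n kQ mQ ∪ (dyadicCube n kQ mQ)ᶜ from
    (Set.union_compl_self _).symm]
  refine IntegrableOn.union
    (integrableOn_of_memLp hp ha (volume_dyadicCube_ne_top _ _)) ?_
  have h0 : Set.EqOn a (fun _ => (0:X)) (dyadicCube n kQ mQ)ᶜ := fun y hy => by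
    by_contra h0
    exact hy (hsupp h0)
  exact (integrableOn_congr_fun h0 (measurableSet_dyadicCube _ _).compl).2 integrableOn_zero

lemma setIntegral_zero_on {S : Set (Fin n → ℝ)} (hS : MeasurableSet S)
    {a : (Fin n → ℝ) → X} (h : ∀ y ∈ S, a y = 0) : ∫ y in S, a y = 0 := by
  rw [setIntegral_congr_fun hS (fun y hy => h y hy), integral_zero]

/-- key vanishing property: integral of an atom over any dyadic cube containing a point
outside of `Q` vanishes. -/
lemma setIntegral_cube_eq_zero {p : ℝ} (hp : 1 < p) {a : (Fin n → ℝ) → X}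
    (ha : MemLp a (ENNReal.ofReal p) volume)
    {kQ : ℤ} {mQ : Fin n → ℤ} (hsupp : Function.support a ⊆ dyadicCube n kQ mQ)
    (hzero : ∫ x, a x = 0) {x : Fin n → ℝ} (hx : x ∉ dyadicCube n kQ mQ) (k : ℤ) :
    ∫ y in dyadicCube n k (fv n k x), a y = 0 := by
  rcases le_or_gt k kQ with hk | hk
  · refine setIntegral_zero_on (measurableSet_dyadicCube _ _) (fun y hy => ?_)
    by_contra h0
    have hyQ : y ∈ dyadicCube n kQ mQ := hsupp h0
    have h1 : fv n k y = fv n k x := fv_eq_of_mem hy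
    have h2 : fv n kQ x = mQ := by
      rw [← fv_congr_scale hk h1]
      exact fv_eq_of_mem hyQ
    exact hx (mem_dyadicCube_iff.2 fun i => congrFun h2 i)
  · by_cases hsub : dyadicCube n kQ mQ ⊆ dyadicCube n k (fv n k x)
    · rw [setIntegral_eq_integral_of_forall_compl_eq_zero (fun y hy => ?_), hzero]
      by_contra h0
      exact hy (hsub (hsupp h0))
    · refine setIntegral_zero_on (measurableSet_dyadicCube _ _) (fun y hy => ?_)
      by_contra h0
      have hyQ : y ∈ dyadicCube n kQ mQ := hsupp h0
      apply hsub
      have he1 : dyadicCube n kQ mQ = dyadicCube n kQ (fv n kQ y) := by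
        rw [fv_eq_of_mem hyQ]
      have he2 : dyadicCube n k (fv n k x) = dyadicCube n k (fv n k y) := by
        rw [fv_eq_of_mem hy]
      rw [he1, he2]
      exact dyadicCube_subset hk.le y

omit [CompleteSpace X] in
lemma dyadicAvg_eq_zero_of_setIntegral_zero {a : (Fin n → ℝ) → X} {k : ℤ} {x : Fin n → ℝ}
    (h : ∫ y in dyadicCube n k (fv n k x), a y = 0) : dyadicAvg n a k x = 0 := by
  unfold dyadicAvg setAvg
  rw [show (fun i => ⌊x i / (2:ℝ) ^ k⌋) = fv n k x from rfl, h, smul_zero]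

/-- a.e.-free norm bound for averages by a sup bound -/
lemma norm_dyadicAvg_le_sup {a : (Fin n → ℝ) → X} {M : ℝ} (hM : 0 ≤ M)
    (h : ∀ y, ‖a y‖ ≤ M) (k : ℤ) (x : Fin n → ℝ) : ‖dyadicAvg n a k x‖ ≤ M := by
  unfold dyadicAvg setAvg
  set S := dyadicCube n k (fun i => ⌊x i / (2:ℝ) ^ k⌋)
  have hpos : 0 < (volume S).toReal := volume_dyadicCube_toReal_pos _ _
  rw [norm_smul, norm_inv, Real.norm_eq_abs, abs_of_pos hpos]
  have hb : ‖∫ y in S, a y‖ ≤ M * (volume S).toReal := by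
    refine norm_setIntegral_le_of_norm_le_const_ae
      (lt_top_iff_ne_top.2 (volume_dyadicCube_ne_top _ _)) ?_
    exact Filter.Eventually.of_forall fun y => h y
  calc (volume S).toReal⁻¹ * ‖∫ y in S, a y‖
      ≤ (volume S).toReal⁻¹ * (M * (volume S).toReal) := by
        exact mul_le_mul_of_nonneg_left hb (inv_nonneg.2 hpos.le)
    _ = M := by field_simp
  
/-- norm bound for averages at scale `k` via the global `L¹` norm. -/
lemma norm_dyadicAvg_le_global {a : (Fin n → ℝ) → X} (hint : Integrable a volume)
    (k : ℤ) (x : Fin n → ℝ) :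
    ‖dyadicAvg n a k x‖ ≤ (((2:ℝ) ^ k) ^ n)⁻¹ * ∫ y, ‖a y‖ := by
  unfold dyadicAvg setAvg
  set S := dyadicCube n k (fun i => ⌊x i / (2:ℝ) ^ k⌋) with hS
  have hvol : (volume S).toReal = ((2:ℝ) ^ k) ^ n := by
    rw [hS, volume_dyadicCube]
    rw [← ENNReal.ofReal_pow (two_zpow_pos k).le, ENNReal.toReal_ofReal (by positivity)]
  have hpos : (0:ℝ) < ((2:ℝ) ^ k) ^ n := by positivity
  rw [norm_smul, norm_inv, Real.norm_eq_abs, hvol, abs_of_pos hpos]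
  refine mul_le_mul_of_nonneg_left ?_ (inv_nonneg.2 hpos.le)
  calc ‖∫ y in S, a y‖ ≤ ∫ y in S, ‖a y‖ := norm_integral_le_integral_norm _
    _ ≤ ∫ y, ‖a y‖ := setIntegral_le_integral hint.norm
        (Filter.Eventually.of_forall fun y => norm_nonneg _)

end integrals
section step
variable {n : ℕ} {X : Type*} [NormedAddCommGroup X] [NormedSpace ℝ X] [CompleteSpace X]

lemma setIntegral_dyadicAvg_eq {a : (Fin n → ℝ) → X} (hint : Integrable a volume)
    {c k : ℤ} (hck : c ≤ k) (m' : Fin n → ℤ) :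
    ∫ y in dyadicCube n k m', dyadicAvg n a c y = ∫ y in dyadicCube n k m', a y := by
  classical
  set s : (Fin n → ℤ) → Set (Fin n → ℝ) :=
    fun mm => dyadicCube n c mm ∩ dyadicCube n k m' with hs
  have hm : ∀ mm, MeasurableSet (s mm) := fun mm =>
    (measurableSet_dyadicCube _ _).inter (measurableSet_dyadicCube _ _)
  have hcover : (⋃ mm, s mm) = dyadicCube n k m' := by
    apply Set.Subset.antisymm
    · exact Set.iUnion_subset fun mm => Set.inter_subset_right
    · intro x hx
      exact Set.mem_iUnion.2 ⟨fv n c x, ⟨mem_dyadicCube_self c x, hx⟩⟩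
  have hd : Pairwise (Function.onFun Disjoint s) := by
    intro m1 m2 hne
    rw [Function.onFun, Set.disjoint_left]
    rintro y ⟨hy1, _⟩ ⟨hy2, _⟩
    exact hne (by rw [← fv_eq_of_mem hy1, fv_eq_of_mem hy2])
  have hu_int : IntegrableOn (dyadicAvg n a c) (dyadicCube n k m') volume := by
    haveI := isFiniteMeasure_restrict_of (n := n) (volume_dyadicCube_ne_top k m')
    refine Integrable.mono' (integrable_const ((((2:ℝ)^c)^n)⁻¹ * ∫ y, ‖a y‖))
      (stronglyMeasurable_dyadicAvg a c).aestronglyMeasurable ?_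
    exact Filter.Eventually.of_forall fun y => norm_dyadicAvg_le_global hint c y
  have ha_int : IntegrableOn a (dyadicCube n k m') volume := hint.integrableOn
  have key : ∀ mm, ∫ y in s mm, dyadicAvg n a c y = ∫ y in s mm, a y := by
    intro mm
    by_cases hin : dyadicCube n c mm ⊆ dyadicCube n k m'
    · have hfull : s mm = dyadicCube n c mm := Set.inter_eq_left.2 hin
      rw [hs] at hfull
      simp only [hs, hfull]
      have hconst : Set.EqOn (dyadicAvg n a c) (fun _ => setAvg n (dyadicCube n c mm) a)
          (dyadicCube n c mm) := by
        intro y hy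
        show dyadicAvg n a c y = _
        unfold dyadicAvg
        rw [show (fun i => ⌊y i / (2:ℝ)^c⌋) = fv n c y from rfl, fv_eq_of_mem hy]
      rw [setIntegral_congr_fun (measurableSet_dyadicCube _ _) hconst, setIntegral_const]
      unfold setAvg
      rw [smul_smul, measureReal_def, mul_inv_cancel₀ (ne_of_gt (volume_dyadicCube_toReal_pos _ _)), one_smul]
    · have hempty : s mm = ∅ := by
        rw [Set.eq_empty_iff_forall_notMem]
        rintro y ⟨hy1, hy2⟩
        apply hin
        have e1 : dyadicCube n c mm = dyadicCube n c (fv n c y) := by rw [fv_eq_of_mem hy1]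
        have e2 : dyadicCube n k m' = dyadicCube n k (fv n k y) := by rw [fv_eq_of_mem hy2]
        rw [e1, e2]
        exact dyadicCube_subset hck y
      rw [hempty]
      simp
  calc ∫ y in dyadicCube n k m', dyadicAvg n a c y
      = ∫ y in ⋃ mm, s mm, dyadicAvg n a c y := by rw [hcover]
    _ = ∑' mm, ∫ y in s mm, dyadicAvg n a c y :=
        integral_iUnion hm hd (by rw [hcover]; exact hu_int)
    _ = ∑' mm, ∫ y in s mm, a y := tsum_congr key
    _ = ∫ y in ⋃ mm, s mm, a y := (integral_iUnion hm hd (by rw [hcover]; exact ha_int)).symm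
    _ = ∫ y in dyadicCube n k m', a y := by rw [hcover]

/-- Tower property: averages of the step function at coarser scales agree with those of `a`. -/
lemma dyadicAvg_dyadicAvg {a : (Fin n → ℝ) → X} (hint : Integrable a volume)
    {c k : ℤ} (hck : c ≤ k) (x : Fin n → ℝ) :
    dyadicAvg n (dyadicAvg n a c) k x = dyadicAvg n a k x := by
  show setAvg n (dyadicCube n k (fv n k x)) (dyadicAvg n a c)
    = setAvg n (dyadicCube n k (fv n k x)) a
  unfold setAvg
  rw [setIntegral_dyadicAvg_eq hint hck]

/-- At finer scales, the average of the step function is its own value. -/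
lemma dyadicAvg_step_const {a : (Fin n → ℝ) → X} {c k : ℤ} (hkc : k ≤ c) (x : Fin n → ℝ) :
    dyadicAvg n (dyadicAvg n a c) k x = dyadicAvg n a c x := by
  show setAvg n (dyadicCube n k (fv n k x)) (dyadicAvg n a c) = _
  unfold setAvg
  have hconst : Set.EqOn (dyadicAvg n a c) (fun _ => dyadicAvg n a c x)
      (dyadicCube n k (fv n k x)) := by
    intro y hy
    show dyadicAvg n a c y = dyadicAvg n a c x
    unfold dyadicAvg
    rw [show (fun i => ⌊y i / (2:ℝ)^c⌋) = fv n c y from rfl,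
      show (fun i => ⌊x i / (2:ℝ)^c⌋) = fv n c x from rfl,
      fv_congr_scale hkc (fv_eq_of_mem hy)]
  rw [setIntegral_congr_fun (measurableSet_dyadicCube _ _) hconst, setIntegral_const,
    smul_smul, measureReal_def, inv_mul_cancel₀ (ne_of_gt (volume_dyadicCube_toReal_pos _ _)), one_smul]

/-- geometric tail bound -/
lemma zpow_tail_sum_le {r : ℝ} (h0 : 0 < r) (h1 : r ≤ 1/2) (k0 : ℤ) (t : Finset ℤ)
    (ht : ∀ k ∈ t, k0 < k) : ∑ k ∈ t, r ^ k ≤ 2 * r ^ (k0 + 1) := by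
  classical
  have hterm : ∀ k ∈ t, r ^ k ≤ r ^ (k0+1) * (1/2 : ℝ) ^ (k - (k0+1)).toNat := by
    intro k hk
    have hk1 : k0 + 1 ≤ k := ht k hk
    have : r ^ k = r ^ (k0+1) * r ^ (k - (k0+1)).toNat := by
      rw [← zpow_natCast r (k - (k0+1)).toNat, Int.toNat_of_nonneg (by omega),
        ← zpow_add₀ (ne_of_gt h0)]
      congr 1
      omega
    rw [this]
    refine mul_le_mul_of_nonneg_left ?_ (zpow_nonneg h0.le _)
    exact pow_le_pow_left₀ h0.le h1 _
  calc ∑ k ∈ t, r ^ k ≤ ∑ k ∈ t, r ^ (k0+1) * (1/2 : ℝ) ^ (k - (k0+1)).toNat :=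
        Finset.sum_le_sum hterm
    _ = r ^ (k0+1) * ∑ k ∈ t, (1/2 : ℝ) ^ (k - (k0+1)).toNat := by rw [Finset.mul_sum]
    _ ≤ r ^ (k0+1) * 2 := by
        refine mul_le_mul_of_nonneg_left ?_ (zpow_nonneg h0.le _)
        have hinj : Set.InjOn (fun k : ℤ => (k - (k0+1)).toNat) t := by
          intro k1 hk1 k2 hk2 he
          have h1' := ht k1 hk1
          have h2' := ht k2 hk2
          simp only at he
          omega
        rw [← Finset.sum_image (f := fun j : ℕ => (1/2:ℝ)^j) (g := fun k : ℤ => (k - (k0+1)).toNat)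
          (fun x hx y hy => hinj hx hy)]
        set T := t.image (fun k : ℤ => (k - (k0+1)).toNat) with hT
        have hsub : T ⊆ Finset.range (T.sup id + 1) := by
          intro j hj
          exact Finset.mem_range.2 (Nat.lt_succ_of_le (Finset.le_sup (f := id) hj))
        calc ∑ j ∈ T, (1/2:ℝ)^j ≤ ∑ j ∈ Finset.range (T.sup id + 1), (1/2:ℝ)^j :=
              Finset.sum_le_sum_of_subset_of_nonneg hsub (fun j _ _ => by positivity)
          _ ≤ 2 := by
              rw [geom_sum_eq (by norm_num)]
              have he : ((1/2:ℝ) ^ (T.sup id + 1) - 1)/((1/2:ℝ) - 1)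
                  = 2 - 2 * (1/2:ℝ) ^ (T.sup id + 1) := by ring
              have hge : (0:ℝ) ≤ (1/2:ℝ) ^ (T.sup id + 1) := by positivity
              rw [he]
              linarith
    _ = 2 * r ^ (k0+1) := by ring

end step
section honest
variable {n : ℕ} {X : Type*} [NormedAddCommGroup X] [NormedSpace ℝ X] [CompleteSpace X]

lemma abs_le_one_of_sum_sq {s : Finset ℤ} {lam : ℤ → ℝ} (hl : ∑ k ∈ s, lam k ^ 2 ≤ 1)
    {k : ℤ} (hk : k ∈ s) : |lam k| ≤ 1 := by
  have h1 : lam k ^ 2 ≤ 1 :=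
    le_trans (Finset.single_le_sum (fun i _ => sq_nonneg (lam i)) hk) hl
  nlinarith [abs_nonneg (lam k), sq_abs (lam k)]

lemma zpow_pow_comm (k : ℤ) (m : ℕ) : ((2:ℝ) ^ k) ^ m = ((2:ℝ) ^ m) ^ k := by
  rw [← zpow_natCast ((2:ℝ) ^ k) m, ← zpow_natCast (2:ℝ) m, ← zpow_mul, ← zpow_mul, mul_comm]

lemma radE_step_bound (hn : 0 < n) {a : (Fin n → ℝ) → X} (hint : Integrable a volume)
    {M : ℝ} (hM : 0 ≤ M) (hsup : ∀ y, ‖a y‖ ≤ M) (c kQ : ℤ) (x : Fin n → ℝ)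
    {s : Finset ℤ} {lam : ℤ → ℝ} (hl : ∑ k ∈ s, lam k ^ 2 ≤ 1) :
    radE s (fun k => lam k • dyadicAvg n (dyadicAvg n a c) k x)
      ≤ M + (((Finset.Icc c kQ).card : ℝ) * M
          + (∫ y, ‖a y‖) * (2 * (((2:ℝ) ^ n)⁻¹) ^ (kQ + 1))) := by
  classical
  set u := dyadicAvg n a c with hu
  set L := ∫ y, ‖a y‖ with hL
  have hL0 : 0 ≤ L := integral_nonneg fun y => norm_nonneg _
  set r := ((2:ℝ) ^ n)⁻¹ with hr
  have hr0 : 0 < r := by positivity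
  have hr2 : r ≤ 1/2 := by
    have h1 : (2:ℝ) ≤ 2 ^ n := by
      calc (2:ℝ) = 2 ^ 1 := (pow_one 2).symm
        _ ≤ 2 ^ n := pow_le_pow_right₀ (by norm_num) hn
    have h2 : ((2:ℝ) ^ n)⁻¹ ≤ (2:ℝ)⁻¹ := inv_anti₀ (by norm_num) h1
    rw [hr]
    linarith
  set g1 : ℤ → X := fun k => (if k < c then lam k else 0) • u x with hg1
  set g2 : ℤ → X := fun k => if k < c then 0 else lam k • dyadicAvg n u k x with hg2
  have hsplit : ∀ k ∈ s, lam k • dyadicAvg n u k x = g1 k + g2 k := by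
    intro k hk
    by_cases h : k < c
    · simp only [hg1, hg2, if_pos h]
      rw [show dyadicAvg n u k x = u x from dyadicAvg_step_const h.le x, add_zero]
    · simp only [hg1, hg2, if_neg h]
      rw [zero_smul, zero_add]
  rw [radE_congr hsplit]
  refine le_trans (radE_add_le s g1 g2) (add_le_add ?_ ?_)
  · refine le_trans (radE_parallel_le s (fun k => if k < c then lam k else 0) (u x)) ?_
    have h1 : Real.sqrt (∑ k ∈ s, (if k < c then lam k else 0) ^ 2) ≤ 1 := by
      rw [show (1:ℝ) = Real.sqrt 1 by rw [Real.sqrt_one]]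
      apply Real.sqrt_le_sqrt
      refine le_trans (Finset.sum_le_sum (fun k _ => ?_)) hl
      by_cases h : k < c
      · rw [if_pos h]
      · rw [if_neg h]
        simpa using sq_nonneg (lam k)
    have h2 : ‖u x‖ ≤ M := norm_dyadicAvg_le_sup hM hsup c x
    calc Real.sqrt (∑ k ∈ s, (if k < c then lam k else 0) ^ 2) * ‖u x‖
        ≤ 1 * M := mul_le_mul h1 h2 (norm_nonneg _) zero_le_one
      _ = M := one_mul M
  · refine le_trans (radE_le_sum s g2) ?_
    have hterm : ∀ k ∈ s, ‖g2 k‖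
        ≤ (if c ≤ k ∧ k ≤ kQ then M else 0) + (if kQ < k then r ^ k * L else 0) := by
      intro k hk
      by_cases h : k < c
      · simp only [hg2, if_pos h, norm_zero]
        have : ¬ (c ≤ k ∧ k ≤ kQ) := fun hc => absurd h (not_lt.2 hc.1)
        rw [if_neg this]
        by_cases h2 : kQ < k
        · rw [if_pos h2]
          positivity
        · rw [if_neg h2]
          norm_num
      · push_neg at h
        simp only [hg2, if_neg (not_lt.2 h)]
        rw [norm_smul, Real.norm_eq_abs]
        have htow : dyadicAvg n u k x = dyadicAvg n a k x := dyadicAvg_dyadicAvg hint h x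
        have habs : |lam k| ≤ 1 := abs_le_one_of_sum_sq hl hk
        by_cases h2 : k ≤ kQ
        · rw [if_pos ⟨h, h2⟩, if_neg (not_lt.2 h2), add_zero]
          calc |lam k| * ‖dyadicAvg n u k x‖ ≤ 1 * M := by
                refine mul_le_mul habs ?_ (norm_nonneg _) zero_le_one
                rw [htow]
                exact norm_dyadicAvg_le_sup hM hsup k x
            _ = M := one_mul M
        · push_neg at h2
          rw [if_neg (fun hc => absurd h2 (not_lt.2 hc.2)), if_pos h2, zero_add]
          calc |lam k| * ‖dyadicAvg n u k x‖ ≤ 1 * (r ^ k * L) := by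
                refine mul_le_mul habs ?_ (norm_nonneg _) zero_le_one
                rw [htow]
                refine le_trans (norm_dyadicAvg_le_global hint k x) (le_of_eq ?_)
                rw [hr, inv_zpow, ← zpow_pow_comm, hL]
            _ = r ^ k * L := one_mul _
    refine le_trans (Finset.sum_le_sum hterm) ?_
    rw [Finset.sum_add_distrib]
    refine add_le_add ?_ ?_
    · rw [← Finset.sum_filter]
      have hsub2 : s.filter (fun k => c ≤ k ∧ k ≤ kQ) ⊆ Finset.Icc c kQ := by
        intro k hk
        rw [Finset.mem_filter] at hk
        exact Finset.mem_Icc.2 hk.2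
      calc ∑ _k ∈ s.filter (fun k => c ≤ k ∧ k ≤ kQ), M
          = ((s.filter (fun k => c ≤ k ∧ k ≤ kQ)).card : ℝ) * M := by
            rw [Finset.sum_const, nsmul_eq_mul]
        _ ≤ ((Finset.Icc c kQ).card : ℝ) * M := by
            refine mul_le_mul_of_nonneg_right ?_ hM
            exact_mod_cast Finset.card_le_card hsub2
    · rw [← Finset.sum_filter]
      have : ∑ k ∈ s.filter (fun k => kQ < k), r ^ k * L
          = (∑ k ∈ s.filter (fun k => kQ < k), r ^ k) * L := by
        rw [Finset.sum_mul]
      rw [this, mul_comm L]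
      refine mul_le_mul_of_nonneg_right ?_ hL0
      exact zpow_tail_sum_le hr0 hr2 kQ _ (fun k hk => (Finset.mem_filter.1 hk).2)

lemma bddAbove_radE_step (hn : 0 < n) {a : (Fin n → ℝ) → X} (hint : Integrable a volume)
    {M : ℝ} (hM : 0 ≤ M) (hsup : ∀ y, ‖a y‖ ≤ M) (c kQ : ℤ) (x : Fin n → ℝ) :
    BddAbove (Set.range (fun q : {q : Finset ℤ × (ℤ → ℝ) // ∑ k ∈ q.1, (q.2 k) ^ 2 ≤ 1} =>
      radE q.1.1 (fun k => q.1.2 k • dyadicAvg n (dyadicAvg n a c) k x))) := by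
  refine ⟨M + (((Finset.Icc c kQ).card : ℝ) * M
      + (∫ y, ‖a y‖) * (2 * (((2:ℝ) ^ n)⁻¹) ^ (kQ + 1))), ?_⟩
  rintro - ⟨q, rfl⟩
  exact radE_step_bound hn hint hM hsup c kQ x q.2

end honest
section sup
variable {n : ℕ} {X : Type*} [NormedAddCommGroup X] [NormedSpace ℝ X]

/-- the full index type of the Rademacher maximal function -/
abbrev FullIdx : Type := {q : Finset ℤ × (ℤ → ℝ) // ∑ k ∈ q.1, (q.2 k) ^ 2 ≤ 1}

instance : Nonempty FullIdx := ⟨⟨(∅, fun _ => 0), by simp⟩⟩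

lemma ofReal_iSup_le {ι : Sort*} [Nonempty ι] {g : ι → ℝ} {b : ℝ≥0∞}
    (h : ∀ i, ENNReal.ofReal (g i) ≤ b) : ENNReal.ofReal (⨆ i, g i) ≤ b := by
  rcases eq_or_ne b ⊤ with rfl | hbt
  · exact le_top
  · have h2 : ∀ i, g i ≤ b.toReal := by
      intro i
      rcases le_or_gt (g i) 0 with h0 | h0
      · exact le_trans h0 ENNReal.toReal_nonneg
      · have hh := h i
        rw [← ENNReal.ofReal_toReal hbt] at hh
        exact (ENNReal.ofReal_le_ofReal_iff ENNReal.toReal_nonneg).1 hh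
    calc ENNReal.ofReal (⨆ i, g i)
        ≤ ENNReal.ofReal b.toReal :=
          ENNReal.ofReal_le_ofReal (Real.iSup_le h2 ENNReal.toReal_nonneg)
      _ = b := ENNReal.ofReal_toReal hbt

lemma rademacherMaximal_nonneg (u : (Fin n → ℝ) → X) (x : Fin n → ℝ) :
    0 ≤ rademacherMaximal n u x :=
  Real.iSup_nonneg fun q => radE_nonneg _ _

lemma enn_MR (u : (Fin n → ℝ) → X) (x : Fin n → ℝ) :
    (‖rademacherMaximal n u x‖₊ : ℝ≥0∞) = ENNReal.ofReal (rademacherMaximal n u x) := by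
  rw [← enorm_eq_nnnorm, ← ofReal_norm, Real.norm_eq_abs, abs_of_nonneg (rademacherMaximal_nonneg u x)]

lemma ofReal_MR_le_Tfull (u : (Fin n → ℝ) → X) (x : Fin n → ℝ) :
    ENNReal.ofReal (rademacherMaximal n u x) ≤ Tfull n u x := by
  unfold rademacherMaximal
  refine ofReal_iSup_le fun q => ?_
  set K := q.1.1.sup (fun k => k.natAbs) with hK
  have hsub : q.1.1 ⊆ Finset.Icc (-(K:ℤ)) K := by
    intro k hk
    have hle : k.natAbs ≤ K := by
      simpa using Finset.le_sup (f := fun k : ℤ => k.natAbs) hk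
    rw [Finset.mem_Icc]
    omega
  calc ENNReal.ofReal (radE q.1.1 fun k => q.1.2 k • dyadicAvg n u k x)
      ≤ TK n K u x := le_iSup_of_le (⟨q.1, q.2, hsub⟩ : PIdx K) le_rfl
    _ ≤ Tfull n u x := le_iSup (fun K => TK n K u x) K

lemma TK_mono {u : (Fin n → ℝ) → X} {K K' : ℕ} (h : K ≤ K') (x : Fin n → ℝ) :
    TK n K u x ≤ TK n K' u x := by
  refine iSup_le fun q => ?_
  have hsub : q.1.1 ⊆ Finset.Icc (-(K':ℤ)) K' :=
    subset_trans q.2.2 (Finset.Icc_subset_Icc (by omega) (by omega))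
  exact le_iSup_of_le (⟨q.1, q.2.1, hsub⟩ : PIdx K') le_rfl

lemma TK_eq_zero_of_avg_zero {u : (Fin n → ℝ) → X} {x : Fin n → ℝ}
    (h : ∀ k, dyadicAvg n u k x = 0) (K : ℕ) : TK n K u x = 0 := by
  refine le_antisymm (iSup_le fun q => le_of_eq ?_) (zero_le)
  rw [radE_congr (g := fun _ => (0:X)) (fun k _ => by rw [h k, smul_zero]), radE_zero]
  exact ENNReal.ofReal_zero

lemma rademacherMaximal_eq_zero_fun {u : (Fin n → ℝ) → X}
    (h : ∀ k x, dyadicAvg n u k x = 0) : rademacherMaximal n u = fun _ => 0 := by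
  funext x
  unfold rademacherMaximal
  have hz : ∀ q : FullIdx, radE q.1.1 (fun k => q.1.2 k • dyadicAvg n u k x) = 0 := fun q => by
    rw [radE_congr (g := fun _ => (0:X)) (fun k _ => by rw [h k x, smul_zero]), radE_zero]
  rw [iSup_congr hz]
  exact ciSup_const

end sup

section holder

lemma lintegral_holder {n : ℕ} {g : (Fin n → ℝ) → ℝ≥0∞} (hg : Measurable g)
    {S : Set (Fin n → ℝ)} (hS : MeasurableSet S) {p : ℝ} (hp : 1 < p) :
    ∫⁻ y in S, g y ≤ (∫⁻ y, g y ^ p) ^ (1/p) * (volume S) ^ (1 - 1/p) := by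
  have hp0 : (0:ℝ) < p := lt_trans one_pos hp
  have hpq : p.HolderConjugate (p/(p-1)) := Real.HolderConjugate.conjExponent hp
  have hmain := ENNReal.lintegral_mul_le_Lp_mul_Lq (volume.restrict S) hpq
    hg.aemeasurable (aemeasurable_const (b := (1:ℝ≥0∞)))
  simp only [Pi.mul_apply, mul_one, ENNReal.one_rpow] at hmain
  refine le_trans hmain (mul_le_mul ?_ (le_of_eq ?_) (zero_le) (zero_le))
  · exact ENNReal.rpow_le_rpow
      (lintegral_mono' Measure.restrict_le_self (le_refl _)) (by positivity)
  · rw [setLIntegral_one]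
    congr 1
    field_simp
end holder

section lpbounds
variable {n : ℕ} {X : Type*} [NormedAddCommGroup X] [NormedSpace ℝ X]

lemma lintegral_nnnorm_rpow_le {u : (Fin n → ℝ) → X} {S : Set (Fin n → ℝ)}
    (hSm : MeasurableSet S) {M : ℝ}
    (hb : ∀ y, ‖u y‖ ≤ M) (hsupp : ∀ y, y ∉ S → u y = 0) {q : ℝ} (hq : 0 < q) :
    ∫⁻ y, (‖u y‖₊ : ℝ≥0∞) ^ q ≤ ENNReal.ofReal M ^ q * volume S := by
  calc ∫⁻ y, (‖u y‖₊ : ℝ≥0∞) ^ q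
      ≤ ∫⁻ y, S.indicator (fun _ => ENNReal.ofReal M ^ q) y := by
        refine lintegral_mono fun y => ?_
        by_cases h : y ∈ S
        · rw [Set.indicator_of_mem h]
          refine ENNReal.rpow_le_rpow ?_ hq.le
          rw [← enorm_eq_nnnorm, ← ofReal_norm]
          exact ENNReal.ofReal_le_ofReal (hb y)
        · rw [Set.indicator_of_notMem h, hsupp y h]
          rw [nnnorm_zero, ENNReal.coe_zero, ENNReal.zero_rpow_of_pos hq]
    _ = ENNReal.ofReal M ^ q * volume S := lintegral_indicator_const hSm _

lemma eLpNorm_ofReal_eq {α : Type*} [MeasurableSpace α] (μ : MeasureTheory.Measure α)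
    {Y : Type*} [NormedAddCommGroup Y] (f : α → Y) {p : ℝ} (hp : 1 < p) :
    eLpNorm f (ENNReal.ofReal p) μ = (∫⁻ y, (‖f y‖₊ : ℝ≥0∞) ^ p ∂μ) ^ (1/p) := by
  have h0 : ENNReal.ofReal p ≠ 0 := by
    rw [ne_eq, ENNReal.ofReal_eq_zero, not_le]
    linarith
  rw [eLpNorm_eq_lintegral_rpow_enorm_toReal h0 ENNReal.ofReal_ne_top,
    ENNReal.toReal_ofReal (by linarith)]
  simp_rw [enorm_eq_nnnorm]

end lpbounds
section core
variable {n : ℕ} {X : Type*} [NormedAddCommGroup X] [NormedSpace ℝ X] [CompleteSpace X]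

lemma core_bound {p : ℝ} (hp : 1 < p) (hn : 0 < n) {C0 : ℝ}
    (hbound : ∀ u : (Fin n → ℝ) → X, MemLp u (ENNReal.ofReal p) volume →
      eLpNorm (rademacherMaximal n u) (ENNReal.ofReal p) volume
        ≤ ENNReal.ofReal C0 * eLpNorm u (ENNReal.ofReal p) volume)
    (kQ : ℤ) (mQ : Fin n → ℤ) {a : (Fin n → ℝ) → X}
    (ha : MemLp a (ENNReal.ofReal p) volume)
    (hsupp : Function.support a ⊆ dyadicCube n kQ mQ)
    (hbnd : ∀ x, ‖a x‖ ≤ ((volume (dyadicCube n kQ mQ)).toReal)⁻¹)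
    (hzero : (∫ x, a x) = 0) :
    ∫⁻ x, Tfull n a x ≤ ENNReal.ofReal C0 := by
  have hp0 : (0:ℝ) < p := lt_trans one_pos hp
  set Q := dyadicCube n kQ mQ with hQ
  have hQm : MeasurableSet Q := measurableSet_dyadicCube kQ mQ
  set vQ := volume Q with hvQ
  have hv0 : vQ ≠ 0 := volume_dyadicCube_ne_zero kQ mQ
  have hvt : vQ ≠ ⊤ := volume_dyadicCube_ne_top kQ mQ
  set MQ := (vQ.toReal)⁻¹ with hMQ
  have hMQ0 : 0 ≤ MQ := inv_nonneg.2 ENNReal.toReal_nonneg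
  have hofMQ : ENNReal.ofReal MQ = vQ⁻¹ := by
    rw [hMQ, ENNReal.ofReal_inv_of_pos (ENNReal.toReal_pos hv0 hvt),
      ENNReal.ofReal_toReal hvt]
  have hint : Integrable a volume := integrable_of_atom hp ha hsupp
  have havg0 : ∀ x, x ∉ Q → ∀ k, dyadicAvg n a k x = 0 := fun x hx k =>
    dyadicAvg_eq_zero_of_setIntegral_zero (setIntegral_cube_eq_zero hp ha hsupp hzero hx k)
  have hmct : ∫⁻ x, Tfull n a x = ⨆ K : ℕ, ∫⁻ x, TK n K a x := by
    show ∫⁻ x, ⨆ K : ℕ, TK n K a x = _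
    exact lintegral_iSup (fun K => measurable_TK K a) (fun K K' h x => TK_mono h x)
  rw [hmct]
  refine iSup_le fun K => ?_
  set c : ℤ := min (-(K:ℤ)) kQ with hc
  have hcK : c ≤ -(K:ℤ) := min_le_left _ _
  set u := dyadicAvg n a c with hu
  have hu_sup : ∀ y, ‖u y‖ ≤ MQ := fun y => norm_dyadicAvg_le_sup hMQ0 hbnd c y
  have hu_supp : ∀ y, y ∉ Q → u y = 0 := fun y hy =>
    dyadicAvg_eq_zero_of_setIntegral_zero (setIntegral_cube_eq_zero hp ha hsupp hzero hy c)
  have hu_lint : ∫⁻ y, (‖u y‖₊ : ℝ≥0∞) ^ p ≤ ENNReal.ofReal MQ ^ p * vQ :=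
    lintegral_nnnorm_rpow_le hQm hu_sup hu_supp hp0
  have hu_mem : MemLp u (ENNReal.ofReal p) volume := by
    refine ⟨(stronglyMeasurable_dyadicAvg a c).aestronglyMeasurable, ?_⟩
    rw [eLpNorm_ofReal_eq volume u hp]
    refine lt_of_le_of_lt (ENNReal.rpow_le_rpow hu_lint (by positivity)) ?_
    refine ENNReal.rpow_lt_top_of_nonneg (by positivity) ?_
    exact ENNReal.mul_ne_top
      (ENNReal.rpow_ne_top_of_nonneg (by linarith) ENNReal.ofReal_ne_top) hvt
  have hMRu := hbound u hu_mem
  have hpt : ∀ x, TK n K a x ≤ ENNReal.ofReal (rademacherMaximal n u x) := by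
    intro x
    refine iSup_le fun q => ?_
    have hcong : radE q.1.1 (fun k => q.1.2 k • dyadicAvg n a k x)
        = radE q.1.1 (fun k => q.1.2 k • dyadicAvg n u k x) := by
      refine radE_congr fun k hk => ?_
      have hkI := q.2.2 hk
      rw [Finset.mem_Icc] at hkI
      rw [hu, dyadicAvg_dyadicAvg hint (le_trans hcK hkI.1) x]
    rw [hcong]
    refine ENNReal.ofReal_le_ofReal ?_
    exact le_ciSup (bddAbove_radE_step hn hint hMQ0 hbnd c kQ x) (⟨q.1, q.2.1⟩ : FullIdx)
  have hTK0 : ∀ x, x ∉ Q → TK n K a x = 0 := fun x hx =>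
    TK_eq_zero_of_avg_zero (fun k => havg0 x hx k) K
  have h1 : ∫⁻ x, TK n K a x = ∫⁻ x in Q, TK n K a x := by
    rw [← lintegral_indicator hQm]
    congr 1
    funext x
    by_cases h : x ∈ Q
    · rw [Set.indicator_of_mem h]
    · rw [Set.indicator_of_notMem h, hTK0 x h]
  calc ∫⁻ x, TK n K a x = ∫⁻ x in Q, TK n K a x := h1
    _ ≤ (∫⁻ x, (TK n K a x) ^ p) ^ (1/p) * vQ ^ (1 - 1/p) :=
        lintegral_holder (measurable_TK K a) hQm hp
    _ ≤ (eLpNorm (rademacherMaximal n u) (ENNReal.ofReal p) volume) * vQ ^ (1 - 1/p) := by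
        refine mul_le_mul_left ?_ _
        rw [eLpNorm_ofReal_eq volume _ hp]
        refine ENNReal.rpow_le_rpow (lintegral_mono fun x => ?_) (by positivity)
        refine ENNReal.rpow_le_rpow ?_ hp0.le
        exact le_trans (hpt x) (le_of_eq (enn_MR u x).symm)
    _ ≤ (ENNReal.ofReal C0 * eLpNorm u (ENNReal.ofReal p) volume) * vQ ^ (1 - 1/p) :=
        mul_le_mul_left hMRu _
    _ ≤ (ENNReal.ofReal C0 * (ENNReal.ofReal MQ ^ p * vQ) ^ (1/p)) * vQ ^ (1 - 1/p) := by
        refine mul_le_mul_left (mul_le_mul_right ?_ _) _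
        rw [eLpNorm_ofReal_eq volume u hp]
        exact ENNReal.rpow_le_rpow hu_lint (by positivity)
    _ = ENNReal.ofReal C0 := by
        rw [hofMQ]
        have hpne : p ≠ 0 := by linarith
        have e0 : (vQ⁻¹) ^ p = vQ ^ (-p) := by rw [ENNReal.inv_rpow, ← ENNReal.rpow_neg]
        have e1 : (vQ⁻¹) ^ p * vQ = vQ ^ (1 - p) := by
          have h2 : vQ ^ ((1:ℝ) - p) = vQ * vQ ^ (-p) := by
            rw [show (1:ℝ) - p = 1 + (-p) by ring, ENNReal.rpow_add _ _ hv0 hvt,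
              ENNReal.rpow_one]
          rw [e0, h2, mul_comm]
        have e2 : (vQ ^ ((1:ℝ) - p)) ^ (1/p) = vQ ^ ((1 - p) * (1/p)) :=
          (ENNReal.rpow_mul vQ _ _).symm
        rw [e1, e2, mul_assoc, ← ENNReal.rpow_add _ _ hv0 hvt,
          show (1 - p) * (1/p) + (1 - 1/p) = 0 by field_simp; ring, ENNReal.rpow_zero, mul_one]

end core

section subadd
variable {n : ℕ} {X : Type*} [NormedAddCommGroup X] [NormedSpace ℝ X] [CompleteSpace X]

lemma dyadicAvg_sum {N : ℕ} (cc : Fin N → ℝ) (a : Fin N → (Fin n → ℝ) → X)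
    (hint : ∀ j, Integrable (a j) volume) (k : ℤ) (x : Fin n → ℝ) :
    dyadicAvg n (fun y => ∑ j, cc j • a j y) k x = ∑ j, cc j • dyadicAvg n (a j) k x := by
  set S := dyadicCube n k (fun i => ⌊x i / (2:ℝ) ^ k⌋) with hS
  show (volume S).toReal⁻¹ • (∫ y in S, ∑ j, cc j • a j y)
    = ∑ j, cc j • ((volume S).toReal⁻¹ • ∫ y in S, a j y)
  have hsum := integral_finset_sum (μ := volume.restrict S) Finset.univ
    (f := fun j y => cc j • a j y) (fun j _ => ((hint j).smul (cc j)).integrableOn)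
  rw [hsum, Finset.smul_sum]
  refine Finset.sum_congr rfl fun j _ => ?_
  rw [integral_smul, smul_comm]

lemma Tfull_sum_le {N : ℕ} (cc : Fin N → ℝ) (a : Fin N → (Fin n → ℝ) → X)
    (hint : ∀ j, Integrable (a j) volume) (x : Fin n → ℝ) :
    Tfull n (fun y => ∑ j, cc j • a j y) x
      ≤ ∑ j, ENNReal.ofReal |cc j| * Tfull n (a j) x := by
  refine iSup_le fun K => ?_
  refine iSup_le fun q => ?_
  have h1 : radE q.1.1 (fun k => q.1.2 k • dyadicAvg n (fun y => ∑ j, cc j • a j y) k x)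
      = radE q.1.1 (fun k => ∑ j, cc j • (q.1.2 k • dyadicAvg n (a j) k x)) := by
    refine radE_congr fun k _ => ?_
    rw [dyadicAvg_sum cc a hint k x, Finset.smul_sum]
    exact Finset.sum_congr rfl fun j _ => smul_comm _ _ _
  rw [h1]
  calc ENNReal.ofReal (radE q.1.1 (fun k => ∑ j, cc j • (q.1.2 k • dyadicAvg n (a j) k x)))
      ≤ ENNReal.ofReal (∑ j, |cc j|
          * radE q.1.1 (fun k => q.1.2 k • dyadicAvg n (a j) k x)) := by
        refine ENNReal.ofReal_le_ofReal ?_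
        refine le_trans (radE_sum_le q.1.1 Finset.univ
          (fun j k => cc j • (q.1.2 k • dyadicAvg n (a j) k x))) ?_
        exact Finset.sum_le_sum fun j _ => le_of_eq (radE_smul q.1.1 (cc j) _)
    _ = ∑ j, ENNReal.ofReal (|cc j|
          * radE q.1.1 (fun k => q.1.2 k • dyadicAvg n (a j) k x)) :=
        ENNReal.ofReal_sum_of_nonneg fun j _ =>
          mul_nonneg (abs_nonneg _) (radE_nonneg _ _)
    _ ≤ ∑ j, ENNReal.ofReal |cc j| * Tfull n (a j) x := by
        refine Finset.sum_le_sum fun j _ => ?_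
        rw [ENNReal.ofReal_mul (abs_nonneg _)]
        refine mul_le_mul_right ?_ _
        calc ENNReal.ofReal (radE q.1.1 (fun k => q.1.2 k • dyadicAvg n (a j) k x))
            ≤ TK n K (a j) x := le_iSup_of_le q le_rfl
          _ ≤ Tfull n (a j) x := le_iSup (fun K => TK n K (a j) x) K

end subadd

/-- Atomic estimate for the (linearized) Rademacher maximal operator: if `M_R` is bounded on
`L^p(ℝⁿ;X)` for some `p ∈ (1,∞)`, then for every dyadic atom `a` (supported in a dyadic
cube `Q`, with `‖a‖_∞ ≤ |Q|⁻¹` and `∫ a = 0`) one has `‖M_R a‖_{L¹} ≲ 1`, and consequently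
`M_R` maps the dyadic atomic `H¹(ℝⁿ;X)` boundedly into `L¹(ℝⁿ)`. -/
theorem rademacherMaximal_atom_bound (n : ℕ) {X : Type*}
    [NormedAddCommGroup X] [NormedSpace ℝ X]
    (p : ℝ) (hp : 1 < p)
    (hbound : ∃ C : ℝ, 0 < C ∧ ∀ u : (Fin n → ℝ) → X,
      MemLp u (ENNReal.ofReal p) volume →
      eLpNorm (rademacherMaximal n u) (ENNReal.ofReal p) volume
        ≤ ENNReal.ofReal C * eLpNorm u (ENNReal.ofReal p) volume) :
    ∃ C : ℝ, 0 < C ∧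
      ((∀ (k : ℤ) (m : Fin n → ℤ) (a : (Fin n → ℝ) → X),
        MemLp a (ENNReal.ofReal p) volume →
        Function.support a ⊆ dyadicCube n k m →
        (∀ x, ‖a x‖ ≤ ((volume (dyadicCube n k m)).toReal)⁻¹) →
        (∫ x, a x) = 0 →
        eLpNorm (rademacherMaximal n a) 1 volume ≤ ENNReal.ofReal C) ∧
      (∀ (N : ℕ) (c : Fin N → ℝ) (k : Fin N → ℤ) (m : Fin N → Fin n → ℤ)
          (a : Fin N → (Fin n → ℝ) → X),
        (∀ j, MemLp (a j) (ENNReal.ofReal p) volume) →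
        (∀ j, Function.support (a j) ⊆ dyadicCube n (k j) (m j)) →
        (∀ j x, ‖a j x‖ ≤ ((volume (dyadicCube n (k j) (m j))).toReal)⁻¹) →
        (∀ j, (∫ x, a j x) = 0) →
        eLpNorm (rademacherMaximal n (fun x => ∑ j, c j • a j x)) 1 volume
          ≤ ENNReal.ofReal (C * ∑ j, |c j|))) := by
  obtain ⟨C0, hC0, hbound⟩ := hbound
  refine ⟨C0, hC0, ?_⟩
  by_cases hX : CompleteSpace X
  · by_cases hn0 : n = 0
    · subst hn0
      haveI : Subsingleton (Fin 0 → ℝ) := ⟨fun x y => funext fun i => i.elim0⟩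
      have hvol : (volume (Set.univ : Set (Fin 0 → ℝ))).toReal = 1 := by
        rw [MeasureTheory.volume_pi, Measure.pi_univ]
        simp
      have hallzero : ∀ (a : (Fin 0 → ℝ) → X), (∫ x, a x) = 0 → ∀ x, a x = 0 := by
        intro a hzero x
        have hconst : a = fun _ => a x := funext fun y => by rw [Subsingleton.elim y x]
        rw [hconst, integral_const, measureReal_def, hvol, one_smul] at hzero
        exact hzero
      have havg : ∀ (a : (Fin 0 → ℝ) → X), (∀ y, a y = 0) →
          ∀ (k' : ℤ) (x : Fin 0 → ℝ), dyadicAvg 0 a k' x = 0 := by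
        intro a ha k' x
        show setAvg 0 _ a = 0
        unfold setAvg
        rw [setIntegral_zero_on (measurableSet_dyadicCube _ _) (fun y _ => ha y), smul_zero]
      constructor
      · intro k m a _ _ _ hzero
        rw [rademacherMaximal_eq_zero_fun (havg a (hallzero a hzero)), eLpNorm_zero']
        exact zero_le
      · intro N c k m a _ _ _ hzeroj
        have hf : ∀ y, (∑ j, c j • a j y) = 0 := by
          intro y
          rw [Finset.sum_eq_zero]
          intro j _
          rw [hallzero (a j) (hzeroj j) y, smul_zero]
        rw [rademacherMaximal_eq_zero_fun (havg _ hf), eLpNorm_zero']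
        exact zero_le
    · have hn : 0 < n := Nat.pos_of_ne_zero hn0
      constructor
      · intro k m a ha hsupp hbnd hzero
        calc eLpNorm (rademacherMaximal n a) 1 volume
            = ∫⁻ x, (‖rademacherMaximal n a x‖₊ : ℝ≥0∞) :=
              eLpNorm_one_eq_lintegral_enorm
          _ ≤ ∫⁻ x, Tfull n a x := by
              refine lintegral_mono fun x => ?_
              rw [enn_MR]
              exact ofReal_MR_le_Tfull a x
          _ ≤ ENNReal.ofReal C0 := core_bound hp hn hbound k m ha hsupp hbnd hzero
      · intro N c k m a haj hsuppj hbndj hzeroj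
        have hintj : ∀ j, Integrable (a j) volume := fun j =>
          integrable_of_atom hp (haj j) (hsuppj j)
        calc eLpNorm (rademacherMaximal n (fun x => ∑ j, c j • a j x)) 1 volume
            = ∫⁻ x, (‖rademacherMaximal n (fun y => ∑ j, c j • a j y) x‖₊ : ℝ≥0∞) :=
              eLpNorm_one_eq_lintegral_enorm
          _ ≤ ∫⁻ x, Tfull n (fun y => ∑ j, c j • a j y) x := by
              refine lintegral_mono fun x => ?_
              rw [enn_MR]
              exact ofReal_MR_le_Tfull _ x
          _ ≤ ∫⁻ x, ∑ j, ENNReal.ofReal |c j| * Tfull n (a j) x :=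
              lintegral_mono fun x => Tfull_sum_le c a hintj x
          _ = ∑ j, ∫⁻ x, ENNReal.ofReal |c j| * Tfull n (a j) x :=
              lintegral_finset_sum _ (fun j _ => (measurable_Tfull (a j)).const_mul _)
          _ = ∑ j, ENNReal.ofReal |c j| * ∫⁻ x, Tfull n (a j) x :=
              Finset.sum_congr rfl fun j _ => lintegral_const_mul _ (measurable_Tfull (a j))
          _ ≤ ∑ j, ENNReal.ofReal |c j| * ENNReal.ofReal C0 := by
              refine Finset.sum_le_sum fun j _ => mul_le_mul_right ?_ _
              exact core_bound hp hn hbound (k j) (m j) (haj j) (hsuppj j) (hbndj j) (hzeroj j)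
          _ = ENNReal.ofReal (C0 * ∑ j, |c j|) := by
              rw [show C0 * ∑ j, |c j| = ∑ j, |c j| * C0 by rw [mul_comm, Finset.sum_mul]]
              rw [ENNReal.ofReal_sum_of_nonneg fun j _ => mul_nonneg (abs_nonneg _) hC0.le]
              exact Finset.sum_congr rfl fun j _ => (ENNReal.ofReal_mul (abs_nonneg _)).symm
  · have hizero : ∀ (f : (Fin n → ℝ) → X) (μ : Measure (Fin n → ℝ)),
        (∫ y, f y ∂μ) = 0 := by
      intro f μ
      rw [MeasureTheory.integral_def]
      exact dif_neg hX
    have havg : ∀ (u : (Fin n → ℝ) → X) (k : ℤ) (x : Fin n → ℝ),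
        dyadicAvg n u k x = 0 := by
      intro u k x
      show setAvg n _ u = 0
      unfold setAvg
      rw [hizero, smul_zero]
    constructor
    · intro k m a _ _ _ _
      rw [rademacherMaximal_eq_zero_fun (fun k' x => havg a k' x), eLpNorm_zero']
      exact zero_le
    · intro N c k m a _ _ _ _
      rw [rademacherMaximal_eq_zero_fun (fun k' x => havg _ k' x), eLpNorm_zero']
      exact zero_le
end
end

section
/- (Abstract Hodge decomposition) Let Y be a reflexive Banach space and A a bisectorial operator in Y. Then Y decomposes as the topological direct sum Y = ker(A) ⊕ closure(range(A)), and the projection onto closure(range(A)) along ker(A) is given by P u = lim_{t → ∞} t²A²(I + t²A²)^{−1} u. -/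
open Filter Topology

noncomputable section

/-- Hahn–Banach criterion for membership in a closed subspace. -/
theorem aux_mem_of_dual {Y : Type*} [NormedAddCommGroup Y] [NormedSpace ℂ Y]
    (M : Submodule ℂ Y) (hM : IsClosed (M : Set Y)) (v : Y)
    (hv : ∀ φ : Y →L[ℂ] ℂ, (∀ n ∈ M, φ n = 0) → φ v = 0) : v ∈ M := by
  by_contra hvM
  haveI : IsClosed (M : Set Y) := hM
  let π : Y →L[ℂ] Y ⧸ M :=
    LinearMap.mkContinuous M.mkQ 1 (fun m => by
      simpa using Submodule.Quotient.norm_mk_le M m)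
  have hπ : ∀ y : Y, π y = M.mkQ y := fun y => rfl
  have hne : π v ≠ 0 := by
    rw [hπ, Submodule.mkQ_apply, Ne, Submodule.Quotient.mk_eq_zero]
    exact hvM
  obtain ⟨g, -, hg⟩ := exists_dual_vector ℂ _ (norm_ne_zero_iff.mpr hne)
  have h0 : (g.comp π) v = 0 := hv (g.comp π) (fun n hn => by
    have : π n = 0 := by
      rw [hπ, Submodule.mkQ_apply, Submodule.Quotient.mk_eq_zero]; exact hn
    simp [ContinuousLinearMap.comp_apply, this])
  rw [ContinuousLinearMap.comp_apply, hg] at h0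
  exact hne (by simpa [norm_eq_zero] using Complex.ofReal_eq_zero.mp h0)

set_option maxHeartbeats 4000000 in
/-- Abstract Hodge decomposition: if `Y` is a reflexive Banach space and `A` a bisectorial
operator in `Y`, then `Y = ker(A) ⊕ closure(range(A))` topologically, and the projection
onto `closure(range A)` along `ker A` is `P u = lim_{t→∞} t²A²(I + t²A²)⁻¹ u`. -/
theorem abstract_hodge_decomposition
    {Y : Type*} [NormedAddCommGroup Y] [NormedSpace ℂ Y] [CompleteSpace Y]
    -- reflexivity
    (hrefl : Function.Surjective (NormedSpace.inclusionInDoubleDual ℂ Y))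
    (A : Y →ₗ[ℂ] Y)
    -- bisectoriality: uniformly bounded resolvents on the imaginary axis
    (R : ℝ → (Y →L[ℂ] Y)) (C : ℝ) (hRbdd : ∀ t : ℝ, ‖R t‖ ≤ C)
    (hRA : ∀ (t : ℝ) (x : Y), R t x + (Complex.I * (t : ℂ)) • A (R t x) = x)
    (hAR : ∀ (t : ℝ) (x : Y), R t (x + (Complex.I * (t : ℂ)) • A x) = x)
    (P : ℝ → (Y →L[ℂ] Y))
    (hPA : ∀ (t : ℝ) (x : Y), P t x + ((t : ℂ) ^ 2) • A (A (P t x)) = x)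
    (hAP : ∀ (t : ℝ) (x : Y), P t (x + ((t : ℂ) ^ 2) • A (A x)) = x) :
    IsCompl (LinearMap.ker A) ((LinearMap.range A).topologicalClosure) ∧
    ∃ Pr : Y →L[ℂ] Y,
      (∀ x, Pr (Pr x) = Pr x) ∧
      LinearMap.ker (Pr : Y →ₗ[ℂ] Y) = LinearMap.ker A ∧
      LinearMap.range (Pr : Y →ₗ[ℂ] Y) = (LinearMap.range A).topologicalClosure ∧
      ∀ u : Y, Tendsto (fun t : ℝ => ((t : ℂ) ^ 2) • A (A (P t u))) atTop (𝓝 (Pr u)) := by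
  classical
  set N := (LinearMap.range A).topologicalClosure with hNdef
  have hC0 : (0:ℝ) ≤ C := le_trans (norm_nonneg _) (hRbdd 0)
  have hRle : ∀ (t : ℝ) (y : Y), ‖R t y‖ ≤ C * ‖y‖ :=
    fun t y => (R t).le_of_opNorm_le (hRbdd t) y
  -- P t = R t ∘ R (-t)
  have hPR : ∀ (t : ℝ) (x : Y), P t x = R t (R (-t) x) := by
    intro t x
    have h1 := hRA t (R (-t) x)
    have h2 := hRA (-t) x
    set z := R (-t) x with hz
    set y := R t z with hy
    have hAz : A z = A y + (Complex.I * (t : ℂ)) • A (A y) := by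
      conv_lhs => rw [← h1]
      rw [map_add, map_smul]
    have hx : y + ((t : ℂ) ^ 2) • A (A y) = x := by
      rw [← h2, hAz, ← h1]
      push_cast
      match_scalars <;> (ring_nf; try (rw [Complex.I_sq]; ring))
    have := hAP t y
    rw [hx] at this
    exact this
  have hPbdd : ∀ (t : ℝ) (x : Y), ‖P t x‖ ≤ C * C * ‖x‖ := by
    intro t x
    rw [hPR]
    calc ‖R t (R (-t) x)‖ ≤ C * ‖R (-t) x‖ := hRle _ _
      _ ≤ C * (C * ‖x‖) := mul_le_mul_of_nonneg_left (hRle _ _) hC0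
      _ = C * C * ‖x‖ := (mul_assoc _ _ _).symm
  -- P t commutes with A
  have hAPcomm : ∀ (t : ℝ) (x : Y), P t (A x) = A (P t x) := by
    intro t x
    have h := hPA t x
    have h2 : A x = A (P t x) + ((t : ℂ) ^ 2) • A (A (A (P t x))) := by
      conv_lhs => rw [← h]
      rw [map_add, map_smul]
    rw [h2]
    exact hAP t (A (P t x))
  -- the complementary projections
  have hQeq : ∀ (t : ℝ) (x : Y), ((t : ℂ) ^ 2) • A (A (P t x)) = x - P t x := by
    intro t x
    rw [eq_sub_iff_add_eq, add_comm]
    exact hPA t x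
  have hPker : ∀ (t : ℝ) (x : Y), A x = 0 → P t x = x := by
    intro t x h0
    have := hAP t x
    rwa [h0, map_zero, smul_zero, add_zero] at this
  -- smallness of A P t
  have hAPsmall : ∀ (t : ℝ), t ≠ 0 → ∀ x : Y, ‖A (P t x)‖ ≤ (C + C * C) * ‖x‖ / |t| := by
    intro t ht x
    have h1 := hRA t (R (-t) x)
    set z := R (-t) x with hz
    have hs : (Complex.I * (t : ℂ)) • A (R t z) = z - R t z := by
      rw [eq_sub_iff_add_eq, add_comm]; exact h1
    have hnorm : |t| * ‖A (R t z)‖ = ‖z - R t z‖ := by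
      rw [← hs, norm_smul]
      simp [Complex.norm_I, Real.norm_eq_abs]
    rw [le_div_iff₀ (abs_pos.mpr ht), hPR, mul_comm, hnorm]
    have b1 : ‖z - R t z‖ ≤ ‖z‖ + ‖R t z‖ := norm_sub_le _ _
    have b2 : ‖z‖ ≤ C * ‖x‖ := hRle _ _
    have b3 : ‖R t z‖ ≤ C * ‖z‖ := hRle _ _
    nlinarith [norm_nonneg x, norm_nonneg z]
  -- P t (A w) → 0
  have hPtend0 : ∀ w : Y, Tendsto (fun t : ℝ => P t (A w)) atTop (𝓝 0) := by
    intro w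
    have hgto : Tendsto (fun t : ℝ => (C + C * C) * ‖w‖ / |t|) atTop (𝓝 0) := by
      have h := (tendsto_abs_atTop_atTop.inv_tendsto_atTop).const_mul ((C + C * C) * ‖w‖)
      simpa [div_eq_mul_inv] using h
    refine squeeze_zero_norm' ?_ hgto
    filter_upwards [eventually_ne_atTop (0:ℝ)] with t ht
    rw [hAPcomm]
    exact hAPsmall t ht w
  -- P t v → 0 for v in the closure of the range
  have hPtendN : ∀ v : Y, v ∈ N → Tendsto (fun t : ℝ => P t v) atTop (𝓝 0) := by
    intro v hv
    rw [NormedAddCommGroup.tendsto_nhds_zero]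
    intro ε hε
    have hv' : v ∈ closure ((LinearMap.range A : Submodule ℂ Y) : Set Y) := by
      rw [hNdef] at hv
      exact hv
    obtain ⟨w0, hw0mem, hw0⟩ := Metric.mem_closure_iff.mp hv' (ε / (2 * (C * C + 1)))
      (by positivity)
    obtain ⟨w, rfl⟩ := hw0mem
    have hdist : ‖v - A w‖ < ε / (2 * (C * C + 1)) := by
      rwa [← dist_eq_norm]
    have h2 := (NormedAddCommGroup.tendsto_nhds_zero.mp (hPtend0 w)) (ε / 2) (by positivity)
    filter_upwards [h2] with t ht
    have hsplit : P t v = P t (v - A w) + P t (A w) := by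
      rw [← map_add]; congr 1; abel
    have hb : ‖P t v‖ ≤ C * C * ‖v - A w‖ + ‖P t (A w)‖ := by
      rw [hsplit]
      exact le_trans (norm_add_le _ _) (add_le_add_left (hPbdd t _) _)
    have hcc : C * C * ‖v - A w‖ ≤ C * C * (ε / (2 * (C * C + 1))) :=
      mul_le_mul_of_nonneg_left hdist.le (mul_nonneg hC0 hC0)
    have hkey : C * C * (ε / (2 * (C * C + 1))) ≤ ε / 2 := by
      have hpos : (0:ℝ) < C * C + 1 := by positivity
      have e : (C * C + 1) * (ε / (2 * (C * C + 1))) = ε / 2 := by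
        field_simp
      calc C * C * (ε / (2 * (C * C + 1))) ≤ (C * C + 1) * (ε / (2 * (C * C + 1))) := by
            have : (0:ℝ) ≤ ε / (2 * (C * C + 1)) := by positivity
            nlinarith
        _ = ε / 2 := e
    calc ‖P t v‖ ≤ C * C * ‖v - A w‖ + ‖P t (A w)‖ := hb
      _ < C * C * (ε / (2 * (C * C + 1))) + ε / 2 := by
          exact add_lt_add_of_le_of_lt hcc ht
      _ ≤ ε / 2 + ε / 2 := by linarith
      _ = ε := by ring
  -- Q t v → v for v in N
  have hQtendN : ∀ v : Y, v ∈ N →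
      Tendsto (fun t : ℝ => ((t : ℂ) ^ 2) • A (A (P t v))) atTop (𝓝 v) := by
    intro v hv
    have h := (hPtendN v hv).const_sub v
    simp only [sub_zero] at h
    simpa only [hQeq] using h
  -- the mean ergodic splitting, via reflexivity
  have hsplit : ∀ u : Y, ∃ x : Y, A x = 0 ∧ u - x ∈ N := by
    intro u
    set U : Ultrafilter ℝ := Ultrafilter.of atTop with hUdef
    have hU : (U : Filter ℝ) ≤ atTop := Ultrafilter.of_le _
    set f : ℝ → WeakDual ℂ (StrongDual ℂ Y) := fun t =>
      StrongDual.toWeakDual (NormedSpace.inclusionInDoubleDual ℂ Y (P t u)) with hfdef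
    have hmem : (WeakDual.toStrongDual ⁻¹' Metric.closedBall 0 (C * C * ‖u‖)) ∈
        Ultrafilter.map f U := by
      refine Ultrafilter.mem_map.mpr (Filter.univ_mem' ?_)
      intro t
      simp only [Set.mem_preimage, Metric.mem_closedBall, dist_zero_right]
      calc dist (WeakDual.toStrongDual (f t)) 0
          = ‖WeakDual.toStrongDual (f t)‖ := dist_zero_right (WeakDual.toStrongDual (f t))
        _ = ‖NormedSpace.inclusionInDoubleDual ℂ Y (P t u)‖ := rfl
        _ ≤ ‖P t u‖ := NormedSpace.double_dual_bound ℂ Y _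
        _ ≤ C * C * ‖u‖ := hPbdd t u
    obtain ⟨ξ, -, hξ⟩ :=
      (WeakDual.isCompact_closedBall (𝕜 := ℂ)
        (0 : StrongDual ℂ (StrongDual ℂ Y)) (C * C * ‖u‖)).ultrafilter_le_nhds
        (Ultrafilter.map f U) (Filter.le_principal_iff.mpr hmem)
    obtain ⟨x, hx⟩ := hrefl (WeakDual.toStrongDual ξ)
    have hf : Tendsto f (U : Filter ℝ) (𝓝 ξ) := by
      rw [Ultrafilter.coe_map] at hξ
      exact hξ
    have hweak : ∀ φ : StrongDual ℂ Y,
        Tendsto (fun t => φ (P t u)) (U : Filter ℝ) (𝓝 (φ x)) := by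
      intro φ
      have h1 : Tendsto (fun t => (f t) φ) (U : Filter ℝ) (𝓝 (ξ φ)) :=
        ((WeakDual.eval_continuous φ).tendsto ξ).comp hf
      have e2 : ξ φ = φ x := by
        have hdd : (NormedSpace.inclusionInDoubleDual ℂ Y x) φ = φ x :=
          NormedSpace.dual_def ℂ Y x φ
        rw [← hdd, hx]; rfl
      rw [e2] at h1
      exact h1
    have hA0 : Tendsto (fun t => A (P t u)) (U : Filter ℝ) (𝓝 0) := by
      have h := (tendsto_abs_atTop_atTop.inv_tendsto_atTop).const_mul ((C + C * C) * ‖u‖)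
      have h' : Tendsto (fun t : ℝ => (C + C * C) * ‖u‖ / |t|) atTop (𝓝 0) := by
        simpa [div_eq_mul_inv] using h
      refine squeeze_zero_norm' ?_ (h'.mono_left hU)
      filter_upwards [hU (eventually_ne_atTop (0:ℝ))] with t ht
      exact hAPsmall t ht u
    have hxker : A x = 0 := by
      have key : ∀ φ : StrongDual ℂ Y, φ (R 1 x) = φ x := by
        intro φ
        have hφR := hweak (φ.comp (R 1))
        have hcont : Continuous fun y : Y =>
            (φ.comp (R 1)) ((Complex.I * ((1:ℝ) : ℂ)) • y) :=
          (φ.comp (R 1)).continuous.comp (continuous_const_smul _)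
        have hφA : Tendsto (fun t => (φ.comp (R 1)) ((Complex.I * ((1:ℝ) : ℂ)) • A (P t u)))
            (U : Filter ℝ) (𝓝 0) := by
          have := (hcont.tendsto 0).comp hA0
          simpa [Function.comp_def] using this
        have hsum := hφR.add hφA
        have e : (fun t => (φ.comp (R 1)) (P t u) +
            (φ.comp (R 1)) ((Complex.I * ((1:ℝ) : ℂ)) • A (P t u))) = fun t => φ (P t u) := by
          funext t
          rw [ContinuousLinearMap.comp_apply, ContinuousLinearMap.comp_apply,
            ← map_add φ, ← map_add (R 1), hAR 1 (P t u)]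
        rw [e] at hsum
        have huniq := tendsto_nhds_unique hsum (hweak φ)
        simpa using huniq
      have hR1 : R 1 x = x := ((NormedSpace.eq_iff_forall_dual_eq ℂ).mpr key)
      have h := hRA 1 x
      rw [hR1] at h
      have h0 : (Complex.I * ((1:ℝ) : ℂ)) • A x = 0 := by
        rwa [add_eq_left] at h
      have hs : (Complex.I * ((1:ℝ) : ℂ)) ≠ 0 := by
        simp [Complex.I_ne_zero]
      exact (smul_eq_zero.mp h0).resolve_left hs
    have humem : u - x ∈ N := by
      have hNclosed : IsClosed (N : Set Y) := Submodule.isClosed_topologicalClosure _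
      apply aux_mem_of_dual N hNclosed
      intro φ hφ
      have hQ0 : ∀ t : ℝ, φ (((t : ℂ) ^ 2) • A (A (P t u))) = 0 := by
        intro t
        refine hφ _ (Submodule.le_topologicalClosure _ ?_)
        exact ⟨((t : ℂ) ^ 2) • A (P t u), by rw [map_smul]⟩
      have hconst : ∀ t : ℝ, φ (P t u) = φ u := by
        intro t
        conv_rhs => rw [← hPA t u]
        rw [map_add, hQ0 t, add_zero]
      have h1 : Tendsto (fun t : ℝ => φ (P t u)) (U : Filter ℝ) (𝓝 (φ u)) := by
        simp only [hconst]; exact tendsto_const_nhds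
      have := tendsto_nhds_unique h1 (hweak φ)
      rw [map_sub, this, sub_self]
    exact ⟨x, hxker, humem⟩
  -- convergence of the projections for every u
  have hconv : ∀ u : Y, ∃ v : Y, v ∈ N ∧ A (u - v) = 0 ∧
      Tendsto (fun t : ℝ => ((t : ℂ) ^ 2) • A (A (P t u))) atTop (𝓝 v) := by
    intro u
    obtain ⟨x, hxker, hxN⟩ := hsplit u
    refine ⟨u - x, hxN, by simpa using hxker, ?_⟩
    have heq : (fun t : ℝ => ((t : ℂ) ^ 2) • A (A (P t u))) =
        fun t : ℝ => ((t : ℂ) ^ 2) • A (A (P t (u - x))) := by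
      funext t
      rw [hQeq, hQeq, map_sub, hPker t x hxker]
      abel
    rw [heq]
    exact hQtendN (u - x) hxN
  choose g hgN hgker hgT using hconv
  -- g is linear
  have hgadd : ∀ u v : Y, g (u + v) = g u + g v := by
    intro u v
    have e : (fun t : ℝ => ((t : ℂ) ^ 2) • A (A (P t (u + v)))) =
        fun t : ℝ => ((t : ℂ) ^ 2) • A (A (P t u)) + ((t : ℂ) ^ 2) • A (A (P t v)) := by
      funext t
      rw [hQeq, hQeq, hQeq, map_add]
      abel
    have h2 : Tendsto (fun t : ℝ => ((t : ℂ) ^ 2) • A (A (P t (u + v)))) atTop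
        (𝓝 (g u + g v)) := by
      rw [e]; exact (hgT u).add (hgT v)
    exact tendsto_nhds_unique (hgT (u + v)) h2
  have hgsmul : ∀ (c : ℂ) (u : Y), g (c • u) = c • g u := by
    intro c u
    have e : (fun t : ℝ => ((t : ℂ) ^ 2) • A (A (P t (c • u)))) =
        fun t : ℝ => c • (((t : ℂ) ^ 2) • A (A (P t u))) := by
      funext t
      rw [hQeq, hQeq, map_smul, smul_sub]
    have h2 : Tendsto (fun t : ℝ => ((t : ℂ) ^ 2) • A (A (P t (c • u)))) atTop
        (𝓝 (c • g u)) := by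
      rw [e]; exact (hgT u).const_smul c
    exact tendsto_nhds_unique (hgT (c • u)) h2
  have hgbdd : ∀ u : Y, ‖g u‖ ≤ (1 + C * C) * ‖u‖ := by
    intro u
    refine le_of_tendsto (hgT u).norm (Filter.Eventually.of_forall fun t => ?_)
    rw [hQeq]
    have h1 := norm_sub_le u (P t u)
    have h2 := hPbdd t u
    nlinarith [norm_nonneg u]
  have hgker' : ∀ u : Y, A u = 0 → g u = 0 := by
    intro u hu
    have e : (fun t : ℝ => ((t : ℂ) ^ 2) • A (A (P t u))) = fun _ : ℝ => (0 : Y) := by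
      funext t
      rw [hQeq, hPker t u hu, sub_self]
    have h2 : Tendsto (fun t : ℝ => ((t : ℂ) ^ 2) • A (A (P t u))) atTop (𝓝 0) := by
      rw [e]; exact tendsto_const_nhds
    exact tendsto_nhds_unique (hgT u) h2
  have hgN' : ∀ v : Y, v ∈ N → g v = v := fun v hv =>
    tendsto_nhds_unique (hgT v) (hQtendN v hv)
  -- the bundled projection
  let gL : Y →ₗ[ℂ] Y :=
    { toFun := g
      map_add' := hgadd
      map_smul' := fun c u => by simpa using hgsmul c u }
  let Pr : Y →L[ℂ] Y := LinearMap.mkContinuous gL (1 + C * C) hgbdd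
  have hPrapp : ∀ u : Y, Pr u = g u := fun u => rfl
  constructor
  · constructor
    · rw [Submodule.disjoint_def]
      intro v hv1 hv2
      have h1 := hgN' v hv2
      have h2 := hgker' v (LinearMap.mem_ker.mp hv1)
      rw [h2] at h1
      exact h1.symm
    · rw [codisjoint_iff_le_sup]
      intro u _
      refine Submodule.mem_sup.mpr ⟨u - g u, LinearMap.mem_ker.mpr (hgker u),
        g u, hgN u, ?_⟩
      abel
  · refine ⟨Pr, ?_, ?_, ?_, fun u => hgT u⟩
    · intro u
      show g (g u) = g u
      exact hgN' (g u) (hgN u)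
    · ext u
      simp only [LinearMap.mem_ker, ContinuousLinearMap.coe_coe]
      constructor
      · intro h
        have h' : g u = 0 := h
        have := hgker u
        rw [h', sub_zero] at this
        exact this
      · intro h
        show g u = 0
        exact hgker' u h
    · apply le_antisymm
      · rintro _ ⟨u, rfl⟩
        exact hgN u
      · intro v hv
        exact ⟨v, hgN' v hv⟩
end
end

section
/- (L^p averaging estimate for first-order operators) Let Γ = Γ₀∇ be a first-order homogeneous partial differential operator with constant coefficients on ℝⁿ, 1 < p < ∞, Q a cube of side length ℓ(Q), and u a function with u and Γu in L^p on a neighborhood of Q. Then |⨍_Q Γu dx|^p ≲ ℓ(Q)^{1−p} (⨍_Q |u|^p dx)^{1/p'} (⨍_Q |Γu|^p dx)^{1/p}, where ⨍_Q denotes the average over Q and 1/p + 1/p' = 1. -/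
open MeasureTheory

noncomputable section

/-- A first-order homogeneous constant-coefficient differential operator
`Γ = Γ₀∇ = ∑ᵢ cᵢ ∂ᵢ` acting on `ℂ^M`-valued functions, with values in `ℂ^N`. -/
def firstOrderOp (n M N : ℕ) (c : Fin n → Matrix (Fin N) (Fin M) ℂ)
    (u : (Fin n → ℝ) → (Fin M → ℂ)) (x : Fin n → ℝ) : Fin N → ℂ :=
  ∑ i, (c i).mulVec (fderiv ℝ u x (Pi.single i (1 : ℝ)))

open Real

set_option maxHeartbeats 1000000

local notation "ψ" => Real.smoothTransition




lemma psi_hasDerivAt (s : ℝ) : HasDerivAt ψ (deriv ψ s) s :=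
  (((Real.smoothTransition.contDiff (n := 1)).differentiable one_ne_zero) s).hasDerivAt

lemma psi_deriv_zero {s : ℝ} (h : s ≤ 0 ∨ 1 ≤ s) : deriv ψ s = 0 := by
  rcases h with h | h
  · rcases lt_or_eq_of_le h with h' | h'
    · have : ψ =ᶠ[nhds s] (fun _ => 0) := by
        filter_upwards [Iio_mem_nhds h'] with t ht
        exact Real.smoothTransition.zero_of_nonpos (le_of_lt ht)
      rw [this.deriv_eq, deriv_const]
    · subst h'
      have : IsLocalMin ψ (0:ℝ) := by
        filter_upwards [Filter.univ_mem] with t _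
        rw [Real.smoothTransition.zero]
        exact Real.smoothTransition.nonneg t
      exact this.deriv_eq_zero
  · rcases lt_or_eq_of_le h with h' | h'
    · have : ψ =ᶠ[nhds s] (fun _ => 1) := by
        filter_upwards [Ioi_mem_nhds h'] with t ht
        exact Real.smoothTransition.one_of_one_le (le_of_lt ht)
      rw [this.deriv_eq, deriv_const]
    · subst h'
      have : IsLocalMax ψ (1:ℝ) := by
        filter_upwards [Filter.univ_mem] with t _
        rw [Real.smoothTransition.one]
        exact Real.smoothTransition.le_one t
      exact this.deriv_eq_zero

lemma exists_psi_deriv_bound : ∃ K : ℝ, 0 ≤ K ∧ ∀ s : ℝ, |deriv ψ s| ≤ K := by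
  have hc : ContinuousOn (fun s => |deriv ψ s|) (Set.Icc (-1 : ℝ) 2) :=
    (((Real.smoothTransition.contDiff (n := 1)).continuous_deriv le_rfl).abs).continuousOn
  obtain ⟨K₀, hK₀⟩ := (isCompact_Icc (a := (-1:ℝ)) (b := 2)).exists_bound_of_continuousOn hc
  refine ⟨max K₀ 0, le_max_right _ _, fun s => ?_⟩
  rcases lt_or_ge s (-1) with h | h
  · have : deriv ψ s = 0 := psi_deriv_zero (Or.inl (by linarith))
    simp [this, le_max_right]
  rcases le_or_gt s 2 with h2 | h2
  · exact le_trans (by simpa using hK₀ s ⟨h, h2⟩) (le_max_left _ _)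
  · have : deriv ψ s = 0 := psi_deriv_zero (Or.inr (by linarith))
    simp [this, le_max_right]

/-- A global bound for the derivative of the smooth transition function. -/
def Kc : ℝ := exists_psi_deriv_bound.choose

lemma Kc_nonneg : 0 ≤ Kc := exists_psi_deriv_bound.choose_spec.1

lemma Kc_bound (s : ℝ) : |deriv ψ s| ≤ Kc := exists_psi_deriv_bound.choose_spec.2 s

/-- 1D cutoff: `0` outside `(α, α+l)`, equal to `1` on `[α+δ, α+l-δ]`. -/
def cutFn (α δ l t : ℝ) : ℝ := ψ ((t - α) / δ) * ψ ((α + l - t) / δ)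

/-- Derivative of the 1D cutoff. -/
def cutFn' (α δ l t : ℝ) : ℝ :=
  deriv ψ ((t - α) / δ) * (1 / δ) * ψ ((α + l - t) / δ) +
    ψ ((t - α) / δ) * (deriv ψ ((α + l - t) / δ) * (-(1 / δ)))

lemma cutFn_nonneg (α δ l t : ℝ) : 0 ≤ cutFn α δ l t :=
  mul_nonneg (Real.smoothTransition.nonneg _) (Real.smoothTransition.nonneg _)

lemma cutFn_le_one (α δ l t : ℝ) : cutFn α δ l t ≤ 1 :=
  mul_le_one₀ (Real.smoothTransition.le_one _) (Real.smoothTransition.nonneg _)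
    (Real.smoothTransition.le_one _)

lemma cutFn_eq_zero {α δ l t : ℝ} (hδ : 0 < δ) (h : t ≤ α ∨ α + l ≤ t) :
    cutFn α δ l t = 0 := by
  rcases h with h | h
  · have h0 : ψ ((t - α) / δ) = 0 := Real.smoothTransition.zero_of_nonpos
      (div_nonpos_of_nonpos_of_nonneg (by linarith) hδ.le)
    rw [cutFn, h0, zero_mul]
  · have h0 : ψ ((α + l - t) / δ) = 0 := Real.smoothTransition.zero_of_nonpos
      (div_nonpos_of_nonpos_of_nonneg (by linarith) hδ.le)
    rw [cutFn, h0, mul_zero]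

lemma cutFn_eq_one {α δ l t : ℝ} (hδ : 0 < δ) (h1 : α + δ ≤ t) (h2 : t ≤ α + l - δ) :
    cutFn α δ l t = 1 := by
  rw [cutFn, Real.smoothTransition.one_of_one_le (by rw [le_div_iff₀ hδ]; linarith),
    Real.smoothTransition.one_of_one_le (by rw [le_div_iff₀ hδ]; linarith), mul_one]

lemma cutFn_hasDerivAt (α : ℝ) {δ : ℝ} (l : ℝ) (hδ : 0 < δ) (t : ℝ) :
    HasDerivAt (cutFn α δ l) (cutFn' α δ l t) t := by
  have h1 : HasDerivAt (fun t : ℝ => (t - α) / δ) (1 / δ) t := by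
    simpa using ((hasDerivAt_id t).sub_const α).div_const δ
  have h2 : HasDerivAt (fun t : ℝ => (α + l - t) / δ) (-(1 / δ)) t := by
    have := ((hasDerivAt_id t).const_sub (α + l)).div_const δ
    rw [show -(1 / δ) = -1 / δ by ring]
    exact this
  exact ((psi_hasDerivAt _).comp t h1).mul ((psi_hasDerivAt _).comp t h2)

lemma abs_cutFn'_le (α : ℝ) {δ : ℝ} (l : ℝ) (hδ : 0 < δ) (t : ℝ) :
    |cutFn' α δ l t| ≤ 2 * Kc / δ := by
  have hδ' : (0:ℝ) < 1 / δ := by rw [one_div]; exact inv_pos.mpr hδ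
  have b1 : |deriv ψ ((t - α) / δ) * (1 / δ) * ψ ((α + l - t) / δ)| ≤ Kc / δ := by
    rw [abs_mul, abs_mul, abs_of_pos hδ', abs_of_nonneg (Real.smoothTransition.nonneg _)]
    calc |deriv ψ ((t - α) / δ)| * (1 / δ) * ψ ((α + l - t) / δ)
        ≤ Kc * (1/δ) * 1 := by
          apply mul_le_mul (mul_le_mul_of_nonneg_right (Kc_bound _) hδ'.le)
            (Real.smoothTransition.le_one _) (Real.smoothTransition.nonneg _)
            (mul_nonneg Kc_nonneg hδ'.le)
      _ = Kc / δ := by ring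
  have b2 : |ψ ((t - α) / δ) * (deriv ψ ((α + l - t) / δ) * (-(1 / δ)))| ≤ Kc / δ := by
    rw [abs_mul, abs_mul, abs_neg, abs_of_pos hδ',
      abs_of_nonneg (Real.smoothTransition.nonneg _)]
    calc ψ ((t - α) / δ) * (|deriv ψ ((α + l - t) / δ)| * (1 / δ))
        ≤ 1 * (Kc * (1/δ)) := by
          apply mul_le_mul (Real.smoothTransition.le_one _)
            (mul_le_mul_of_nonneg_right (Kc_bound _) hδ'.le)
            (by positivity) zero_le_one
      _ = Kc / δ := by ring
  calc |cutFn' α δ l t| ≤ _ + _ := abs_add_le _ _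
    _ ≤ Kc / δ + Kc / δ := add_le_add b1 b2
    _ = 2 * Kc / δ := by ring

lemma cutFn'_eq_zero_mid {α δ l t : ℝ} (hδ : 0 < δ) (h1 : α + δ ≤ t) (h2 : t ≤ α + l - δ) :
    cutFn' α δ l t = 0 := by
  rw [cutFn', psi_deriv_zero (s := (t - α) / δ) (Or.inr (by rw [le_div_iff₀ hδ]; linarith)),
    psi_deriv_zero (s := (α + l - t) / δ) (Or.inr (by rw [le_div_iff₀ hδ]; linarith))]
  ring

lemma cutFn'_eq_zero_out {α δ l t : ℝ} (hδ : 0 < δ) (h : t ≤ α ∨ α + l ≤ t) :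
    cutFn' α δ l t = 0 := by
  rcases h with h | h
  · rw [cutFn',
      psi_deriv_zero (s := (t - α) / δ)
        (Or.inl (div_nonpos_of_nonpos_of_nonneg (by linarith) hδ.le)),
      Real.smoothTransition.zero_of_nonpos (x := (t - α) / δ)
        (div_nonpos_of_nonpos_of_nonneg (by linarith) hδ.le)]
    ring
  · rw [cutFn',
      psi_deriv_zero (s := (α + l - t) / δ)
        (Or.inl (div_nonpos_of_nonpos_of_nonneg (by linarith) hδ.le)),
      Real.smoothTransition.zero_of_nonpos (x := (α + l - t) / δ)
        (div_nonpos_of_nonpos_of_nonneg (by linarith) hδ.le)]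
    ring

lemma cutFn_contDiff (α : ℝ) {δ : ℝ} (l : ℝ) : ContDiff ℝ 1 (cutFn α δ l) := by
  apply ContDiff.mul
  · exact (Real.smoothTransition.contDiff (n := 1)).comp
      (((contDiff_id (E := ℝ)).sub contDiff_const).div_const δ)
  · exact (Real.smoothTransition.contDiff (n := 1)).comp
      ((contDiff_const.sub (contDiff_id (E := ℝ))).div_const δ)

lemma cutFn_continuous (α δ l : ℝ) : Continuous (cutFn α δ l) := by
  apply Continuous.mul
  · exact Real.smoothTransition.continuous.comp (by continuity)
  · exact Real.smoothTransition.continuous.comp (by continuity)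

lemma cutFn'_continuous (α δ l : ℝ) : Continuous (cutFn' α δ l) := by
  have hd : Continuous (deriv ψ) :=
    (Real.smoothTransition.contDiff (n := 1)).continuous_deriv le_rfl
  have hψ := Real.smoothTransition.continuous
  apply Continuous.add
  · exact ((hd.comp (by continuity)).mul continuous_const).mul (hψ.comp (by continuity))
  · exact (hψ.comp (by continuity)).mul ((hd.comp (by continuity)).mul continuous_const)




lemma one_sub_prod_le_sum {ι : Type*} (s : Finset ι) (f : ι → ℝ)
    (h0 : ∀ i ∈ s, 0 ≤ f i) (h1 : ∀ i ∈ s, f i ≤ 1) :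
    1 - ∏ i ∈ s, f i ≤ ∑ i ∈ s, (1 - f i) := by
  classical
  induction s using Finset.induction_on with
  | empty => simp
  | insert a t hnotmem ih =>
    rw [Finset.prod_insert hnotmem, Finset.sum_insert hnotmem]
    have ht0 : ∀ i ∈ t, 0 ≤ f i := fun i hi => h0 i (Finset.mem_insert_of_mem hi)
    have ht1 : ∀ i ∈ t, f i ≤ 1 := fun i hi => h1 i (Finset.mem_insert_of_mem hi)
    have hP0 : 0 ≤ ∏ i ∈ t, f i := Finset.prod_nonneg ht0
    have hP1 : ∏ i ∈ t, f i ≤ 1 := Finset.prod_le_one ht0 ht1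
    have ha0 := h0 a (Finset.mem_insert_self a t)
    have ha1 := h1 a (Finset.mem_insert_self a t)
    have ih' := ih ht0 ht1
    nlinarith [ih ht0 ht1]

lemma norm_setIntegral_le_holder {α : Type*} [MeasurableSpace α] (μ : Measure α)
    {s : Set α} (hs : MeasurableSet s) (hfin : μ s ≠ ⊤)
    {E' : Type*} [NormedAddCommGroup E'] (v : α → E') {p q : ℝ}
    (hpq : Real.HolderConjugate p q) (Cb : ℝ) (hbd : ∀ x ∈ s, ‖v x‖ ≤ Cb)
    (hmeas : AEStronglyMeasurable v (μ.restrict s)) :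
    ∫ x in s, ‖v x‖ ∂μ ≤ ((μ s).toReal) ^ (1/q) * (∫ x in s, ‖v x‖ ^ p ∂μ) ^ (1/p) := by
  haveI : IsFiniteMeasure (μ.restrict s) :=
    ⟨by rwa [Measure.restrict_apply_univ, lt_top_iff_ne_top]⟩
  have hvb : ∀ᵐ x ∂(μ.restrict s), ‖v x‖ ≤ Cb := by
    filter_upwards [ae_restrict_mem hs] with x hx using hbd x hx
  have hv : MemLp (fun x => ‖v x‖) (ENNReal.ofReal p) (μ.restrict s) :=
    (memLp_top_of_bound hmeas.norm Cb (by simpa using hvb)).mono_exponent le_top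
  have h1 : MemLp (fun _ : α => (1:ℝ)) (ENNReal.ofReal q) (μ.restrict s) := memLp_const 1
  have H := integral_mul_norm_le_Lp_mul_Lq (f := fun x => ‖v x‖) (g := fun _ : α => (1:ℝ)) hpq hv h1
  simp only [norm_one, mul_one, Real.one_rpow, norm_norm] at H
  calc ∫ x in s, ‖v x‖ ∂μ
      ≤ (∫ x in s, ‖v x‖ ^ p ∂μ) ^ (1/p) * (∫ _ in s, (1:ℝ) ∂μ) ^ (1/q) := by
        simpa using H
    _ = ((μ s).toReal) ^ (1/q) * (∫ x in s, ‖v x‖ ^ p ∂μ) ^ (1/p) := by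
        rw [setIntegral_const, smul_eq_mul, mul_one, mul_comm]
        rfl

lemma vol_box_toReal {n : ℕ} (i : Fin n) (b : Fin n → ℝ) (δ l : ℝ) (hδ : 0 ≤ δ)
    (hl : 0 ≤ l) :
    (volume (Set.pi Set.univ fun j => Set.Icc (b j)
        (b j + if j = i then δ else l))).toReal = δ * l ^ (n - 1) := by
  rw [Set.pi_univ_Icc, Real.volume_Icc_pi_toReal (by
    intro j; dsimp; split <;> linarith)]
  have : ∀ j : Fin n, (b j + if j = i then δ else l) - b j = if j = i then δ else l := by
    intro j; ring
  rw [Finset.prod_congr rfl (fun j _ => this j),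
    ← Finset.mul_prod_erase Finset.univ _ (Finset.mem_univ i), if_pos rfl]
  congr 1
  rw [Finset.prod_congr rfl (fun j hj => if_neg (Finset.ne_of_mem_erase hj)),
    Finset.prod_const, Finset.card_erase_of_mem (Finset.mem_univ i), Finset.card_univ,
    Fintype.card_fin]




lemma T_eq (p p' CL K nn l2 α β : ℝ) (hp : 1 < p) (hpq : 1/p + 1/p' = 1)
    (hl2 : 0 < l2) (hα : 0 < α) (hβ : 0 < β) :
    CL * (2*K/(α^(1/p)/β^(1/p))) * ((2*((α^(1/p)/β^(1/p))*l2))^(1/p') * α^(1/p))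
      + nn * ((2*((α^(1/p)/β^(1/p))*l2))^(1/p') * β^(1/p))
    = (2*l2)^(1/p') * (2*K*CL + nn) * ((α^(1/p))^(1/p') * (β^(1/p))^(1/p)) := by
  have hp0 : 0 < p := lt_trans one_pos hp
  have hp'0 : 0 < p' := by
    rcases lt_trickery : lt_or_ge 0 p' with h | h
    · exact h
    · exfalso
      have h1 : 1/p < 1 := by rw [div_lt_one hp0]; exact hp
      have h2 : 1/p' ≤ 0 := div_nonpos_of_nonneg_of_nonpos zero_le_one h
      linarith
  set A : ℝ := α^(1/p) with hAdef
  set B : ℝ := β^(1/p) with hBdef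
  have hA : 0 < A := Real.rpow_pos_of_pos hα _
  have hB : 0 < B := Real.rpow_pos_of_pos hβ _
  have hArel : A^(1/p') * A^(1/p) = A := by
    rw [← Real.rpow_add hA, show 1/p' + 1/p = 1 by linarith, Real.rpow_one]
  have hBrel : B^(1/p') * B^(1/p) = B := by
    rw [← Real.rpow_add hB, show 1/p' + 1/p = 1 by linarith, Real.rpow_one]
  clear_value A B
  rw [show (2*((A/B)*l2)) = (2*l2)*(A/B) by ring,
    Real.mul_rpow (by positivity) (by positivity), Real.div_rpow hA.le hB.le]
  obtain ⟨a1, ha1d⟩ : ∃ y, A^(1/p') = y := ⟨_, rfl⟩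
  obtain ⟨a2, ha2d⟩ : ∃ y, A^(1/p) = y := ⟨_, rfl⟩
  obtain ⟨b1, hb1d⟩ : ∃ y, B^(1/p') = y := ⟨_, rfl⟩
  obtain ⟨b2, hb2d⟩ : ∃ y, B^(1/p) = y := ⟨_, rfl⟩
  have ha1 : 0 < a1 := ha1d ▸ Real.rpow_pos_of_pos hA _
  have ha2 : 0 < a2 := ha2d ▸ Real.rpow_pos_of_pos hA _
  have hb1 : 0 < b1 := hb1d ▸ Real.rpow_pos_of_pos hB _
  have hb2 : 0 < b2 := hb2d ▸ Real.rpow_pos_of_pos hB _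
  rw [ha1d, ha2d] at hArel
  rw [hb1d, hb2d] at hBrel
  simp only [ha1d, ha2d, hb1d, hb2d]
  rw [← hArel, ← hBrel]
  field_simp

lemma final_algebra (p p' α β lv D C : ℝ) (n : ℕ) (hn : 1 ≤ n) (hp : 1 < p)
    (hpq : 1/p + 1/p' = 1) (hα : 0 < α) (hβ : 0 < β) (hL : 0 < lv) (hD : 0 ≤ D)
    (hC : 2^(p-1) * D^p ≤ C) :
    ((lv^n : ℝ)⁻¹ * ((2*lv^(n-1))^(1/p') * D * ((α^(1/p))^(1/p') * (β^(1/p))^(1/p)))) ^ p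
      ≤ C * lv^(1-p) * ((lv^n : ℝ)⁻¹ * α)^(1/p') * ((lv^n : ℝ)⁻¹ * β)^(1/p) := by
  have hp0 : 0 < p := lt_trans one_pos hp
  have hp'0 : 0 < p' := by
    by_contra h
    push_neg at h
    have h1 : 1/p < 1 := by rw [div_lt_one hp0]; exact hp
    have h2 : 1/p' ≤ 0 := div_nonpos_of_nonneg_of_nonpos zero_le_one h
    linarith
  have hlv := hL.le
  have hpow : (0:ℝ) < lv ^ n := pow_pos hL n
  have hinv : (0:ℝ) ≤ (lv^n : ℝ)⁻¹ := inv_nonneg.mpr hpow.le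
  have hpe' : (1/p') * p = p - 1 := by
    have h1 : 1/p' = 1 - 1/p := by linarith
    rw [h1]
    field_simp
  have A1 : ((α^(1/p))^(1/p'))^p = α^(1/p') := by
    rw [← Real.rpow_mul hα.le (1/p) (1/p'), ← Real.rpow_mul hα.le]
    congr 1
    field_simp
  have B1 : ((β^(1/p))^(1/p))^p = β^(1/p) := by
    rw [← Real.rpow_mul hβ.le (1/p) (1/p), ← Real.rpow_mul hβ.le]
    congr 1
    field_simp
  have C1 : ((2*lv^(n-1))^(1/p'))^p = 2^(p-1) * lv^(((n:ℝ)-1)*(p-1)) := by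
    rw [← Real.rpow_mul (by positivity), hpe',
      Real.mul_rpow (by norm_num) (pow_nonneg hlv _)]
    congr 1
    rw [← Real.rpow_natCast lv (n-1), ← Real.rpow_mul hlv]
    congr 1
    rw [Nat.cast_sub hn, Nat.cast_one]
  have D1 : ∀ z : ℝ, ((lv^n : ℝ)⁻¹)^z = lv^(-(n:ℝ)*z) := by
    intro z
    rw [← Real.rpow_natCast lv n, ← Real.rpow_neg hlv, ← Real.rpow_mul hlv]
  have h2l : (0:ℝ) ≤ (2*lv^(n-1))^(1/p') :=
    Real.rpow_nonneg (mul_nonneg (by norm_num) (pow_nonneg hlv _)) _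
  have hαe : (0:ℝ) ≤ (α^(1/p))^(1/p') := Real.rpow_nonneg (Real.rpow_nonneg hα.le _) _
  have hβe : (0:ℝ) ≤ (β^(1/p))^(1/p) := Real.rpow_nonneg (Real.rpow_nonneg hβ.le _) _
  have e1 : ((lv^n : ℝ)⁻¹ * ((2*lv^(n-1))^(1/p') * D * ((α^(1/p))^(1/p') * (β^(1/p))^(1/p)))) ^ p
      = (((lv^n : ℝ)⁻¹)^p * ((2*lv^(n-1))^(1/p'))^p) *
          (D^p * (((α^(1/p))^(1/p'))^p * ((β^(1/p))^(1/p))^p)) := by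
    rw [show (lv^n : ℝ)⁻¹ * ((2*lv^(n-1))^(1/p') * D * ((α^(1/p))^(1/p') * (β^(1/p))^(1/p)))
        = ((lv^n : ℝ)⁻¹ * (2*lv^(n-1))^(1/p')) *
            (D * ((α^(1/p))^(1/p') * (β^(1/p))^(1/p))) by ring]
    rw [Real.mul_rpow (mul_nonneg hinv h2l) (mul_nonneg hD (mul_nonneg hαe hβe)),
      Real.mul_rpow hinv h2l, Real.mul_rpow hD (mul_nonneg hαe hβe),
      Real.mul_rpow hαe hβe]
  have key1 : ((lv^n : ℝ)⁻¹ * ((2*lv^(n-1))^(1/p') * D *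
        ((α^(1/p))^(1/p') * (β^(1/p))^(1/p)))) ^ p
      = 2^(p-1) * D^p * (lv^(1-p-(n:ℝ)) * α^(1/p') * β^(1/p)) := by
    rw [e1, A1, B1, C1, D1 p,
      show (1-p-(n:ℝ)) = (-(n:ℝ)*p) + (((n:ℝ)-1)*(p-1)) by ring,
      Real.rpow_add hL]
    ring
  have key2 : C * lv^(1-p) * ((lv^n : ℝ)⁻¹ * α)^(1/p') * ((lv^n : ℝ)⁻¹ * β)^(1/p)
      = C * (lv^(1-p-(n:ℝ)) * α^(1/p') * β^(1/p)) := by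
    rw [Real.mul_rpow hinv hα.le, Real.mul_rpow hinv hβ.le, D1 (1/p'), D1 (1/p)]
    have hsum : -(n:ℝ)*(1/p') + -(n:ℝ)*(1/p) = -(n:ℝ) := by
      rw [← mul_add, show 1/p' + 1/p = 1 by linarith, mul_one]
    rw [show (1-p-(n:ℝ)) = ((1-p) + -(n:ℝ)*(1/p')) + -(n:ℝ)*(1/p) by linarith,
      Real.rpow_add hL, Real.rpow_add hL]
    ring
  rw [key1, key2]
  apply mul_le_mul_of_nonneg_right hC
  have h1 : (0:ℝ) ≤ lv^(1-p-(n:ℝ)) := Real.rpow_nonneg hlv _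
  have h2 : (0:ℝ) ≤ α^(1/p') := Real.rpow_nonneg hα.le _
  have h3 : (0:ℝ) ≤ β^(1/p) := Real.rpow_nonneg hβ.le _
  positivity



lemma master_bound (n M N : ℕ) (c : Fin n → Matrix (Fin N) (Fin M) ℂ)
    (p p' : ℝ) (hpq : Real.HolderConjugate p p')
    (a : Fin n → ℝ) (L : ℝ) (hL : 0 < L)
    (U : Set (Fin n → ℝ)) (hU : IsOpen U)
    (hQU : Set.pi Set.univ (fun i => Set.Icc (a i) (a i + L)) ⊆ U)
    (u : (Fin n → ℝ) → (Fin M → ℂ)) (hu : ContDiffOn ℝ 1 u U)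
    (δ : ℝ) (hδ : 0 < δ) :
    ‖∫ x in Set.pi Set.univ (fun i => Set.Icc (a i) (a i + L)), firstOrderOp n M N c u x‖
      ≤ (∑ i, ‖(LinearMap.toContinuousLinearMap (((c i).mulVecLin).restrictScalars ℝ) :
            (Fin M → ℂ) →L[ℝ] (Fin N → ℂ))‖) * (2 * Kc / δ) *
          ((2 * (δ * L ^ (n-1))) ^ (1/p') *
            (∫ x in Set.pi Set.univ (fun i => Set.Icc (a i) (a i + L)), ‖u x‖ ^ p) ^ (1/p))
        + n * ((2 * (δ * L ^ (n-1))) ^ (1/p') *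
            (∫ x in Set.pi Set.univ (fun i => Set.Icc (a i) (a i + L)),
              ‖firstOrderOp n M N c u x‖ ^ p) ^ (1/p)) := by
  classical
  set Q : Set (Fin n → ℝ) := Set.pi Set.univ (fun i => Set.Icc (a i) (a i + L)) with hQdef
  set Γ : (Fin n → ℝ) → (Fin N → ℂ) := firstOrderOp n M N c u with hΓdef
  set Lmap : Fin n → (Fin M → ℂ) →L[ℝ] (Fin N → ℂ) :=
    fun i => LinearMap.toContinuousLinearMap (((c i).mulVecLin).restrictScalars ℝ) with hLmapdef
  have hp0 : 0 < p := hpq.pos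
  have hp'0 : 0 < p' := hpq.symm.pos
  have hKc := Kc_nonneg
  -- basic facts about Q
  have hQIcc : Q = Set.Icc a (fun i => a i + L) := Set.pi_univ_Icc a _
  have hQc : IsCompact Q := by rw [hQIcc]; exact isCompact_Icc
  have hQcl : IsClosed Q := by rw [hQIcc]; exact isClosed_Icc
  have hQm : MeasurableSet Q := hQcl.measurableSet
  have hQfin : volume Q ≠ ⊤ := hQc.measure_ne_top
  have hQU' : Q ⊆ U := hQU
  -- epsilon and fat box
  obtain ⟨ε₀, hε₀, hthick⟩ := hQc.exists_thickening_subset_open hU hQU'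
  set ε : ℝ := ε₀ / 2 with hεdef
  have hε : 0 < ε := by rw [hεdef]; positivity
  have hε2 : 0 < ε / 2 := by positivity
  set FB : Set (Fin n → ℝ) := Set.pi Set.univ (fun j => Set.Icc (a j - ε) (a j + L + ε))
    with hFBdef
  have hFBc : IsCompact FB := by rw [hFBdef, Set.pi_univ_Icc]; exact isCompact_Icc
  have hFBcl : IsClosed FB := hFBc.isClosed
  have hFBU : FB ⊆ U := by
    intro x hx
    rw [hFBdef, Set.mem_univ_pi] at hx
    apply hthick
    refine Metric.mem_thickening_iff.mpr
      ⟨fun j => max (a j) (min (x j) (a j + L)), ?_, ?_⟩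
    · rw [hQdef, Set.mem_univ_pi]
      intro j
      exact ⟨le_max_left _ _, max_le (by linarith) (min_le_right _ _)⟩
    · have hd : dist x (fun j => max (a j) (min (x j) (a j + L))) ≤ ε := by
        rw [dist_pi_le_iff hε.le]
        intro j
        have hxj : a j - ε ≤ x j ∧ x j ≤ a j + L + ε := by
          have := hx j; rwa [Set.mem_Icc] at this
        rw [Real.dist_eq]
        rcases le_total (x j) (a j) with h1 | h1
        · rw [min_eq_left (by linarith), max_eq_left h1, abs_le]
          exact ⟨by linarith [hxj.1], by linarith⟩
        · rcases le_total (x j) (a j + L) with h2 | h2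
          · rw [min_eq_left h2, max_eq_right h1]
            simpa using hε.le
          · rw [min_eq_right h2, max_eq_right (by linarith), abs_le]
            exact ⟨by linarith, by linarith [hxj.2]⟩
      calc dist x _ ≤ ε := hd
        _ < ε₀ := by rw [hεdef]; linarith
  -- outer cutoff η, global extension g
  set η : (Fin n → ℝ) → ℝ := fun x => ∏ j, cutFn (a j - ε) (ε/2) (L + 2*ε) (x j) with hηdef
  have hηC : ContDiff ℝ 1 η := by
    apply contDiff_prod
    intro j _
    exact (cutFn_contDiff _ _).comp
      ((ContinuousLinearMap.proj j : ((Fin n → ℝ)) →L[ℝ] ℝ).contDiff)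
  have hηcont : Continuous η := hηC.continuous
  set W : Set (Fin n → ℝ) := Set.pi Set.univ (fun j => Set.Ioo (a j - ε/2) (a j + L + ε/2))
    with hWdef
  have hWopen : IsOpen W := isOpen_set_pi Set.finite_univ (fun j _ => isOpen_Ioo)
  have hQW : Q ⊆ W := by
    intro x hx
    rw [hQdef, Set.mem_univ_pi] at hx
    rw [hWdef, Set.mem_univ_pi]
    intro j
    have hxj := hx j
    rw [Set.mem_Icc] at hxj
    rw [Set.mem_Ioo]
    constructor <;> [linarith [hxj.1]; linarith [hxj.2]]
  have hη1 : ∀ x ∈ W, η x = 1 := by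
    intro x hx
    rw [hWdef, Set.mem_univ_pi] at hx
    apply Finset.prod_eq_one
    intro j _
    have hxj := hx j
    rw [Set.mem_Ioo] at hxj
    exact cutFn_eq_one hε2 (by linarith [hxj.1]) (by linarith [hxj.2])
  have hη0 : ∀ x, x ∉ FB → η x = 0 := by
    intro x hx
    rw [hFBdef, Set.mem_univ_pi] at hx
    push_neg at hx
    obtain ⟨j, hj⟩ := hx
    rw [Set.mem_Icc, not_and_or] at hj
    apply Finset.prod_eq_zero (Finset.mem_univ j)
    apply cutFn_eq_zero hε2
    rcases hj with hj | hj
    · push_neg at hj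
      exact Or.inl (by linarith)
    · push_neg at hj
      exact Or.inr (by linarith)
  set g : (Fin n → ℝ) → (Fin M → ℂ) := fun x => η x • u x with hgdef
  have hgC : ContDiff ℝ 1 g := by
    rw [contDiff_iff_contDiffAt]
    intro x
    by_cases hx : x ∈ U
    · exact hηC.contDiffAt.smul ((hu x hx).contDiffAt (hU.mem_nhds hx))
    · have hc : g =ᶠ[nhds x] (fun _ => 0) := by
        filter_upwards [hFBcl.isOpen_compl.mem_nhds (fun h => hx (hFBU h))] with y hy
        simp only [hgdef]
        rw [hη0 y hy, zero_smul]
      exact (contDiffAt_const (c := (0 : Fin M → ℂ))).congr_of_eventuallyEq hc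
  have hgcont : Continuous g := hgC.continuous
  have hgsupp : HasCompactSupport g := by
    apply HasCompactSupport.intro hFBc
    intro x hx
    simp only [hgdef]
    rw [hη0 x hx, zero_smul]
  have hgW : ∀ x ∈ W, g x = u x := by
    intro x hx
    simp only [hgdef]
    rw [hη1 x hx, one_smul]
  have hgQ : ∀ x ∈ Q, g x = u x := fun x hx => hgW x (hQW hx)
  have hg0 : ∀ x, x ∉ FB → g x = 0 := by
    intro x hx
    simp only [hgdef]
    rw [hη0 x hx, zero_smul]
  have hgderiv : ∀ x ∈ Q, fderiv ℝ g x = fderiv ℝ u x := by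
    intro x hx
    apply Filter.EventuallyEq.fderiv_eq
    filter_upwards [hWopen.mem_nhds (hQW hx)] with y hy using hgW y hy
  -- inner cutoff χ
  set χ : (Fin n → ℝ) → ℝ := fun x => ∏ j, cutFn (a j) δ L (x j) with hχdef
  set Dχ : Fin n → (Fin n → ℝ) → ℝ := fun i x =>
    cutFn' (a i) δ L (x i) * ∏ j ∈ Finset.univ.erase i, cutFn (a j) δ L (x j) with hDχdef
  have hχcont : Continuous χ :=
    continuous_finset_prod _ (fun j _ => (cutFn_continuous _ _ _).comp (continuous_apply j))
  have hDχcont : ∀ i, Continuous (Dχ i) := fun i =>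
    ((cutFn'_continuous _ _ _).comp (continuous_apply i)).mul
      (continuous_finset_prod _ (fun j _ => (cutFn_continuous _ _ _).comp (continuous_apply j)))
  have hχnn : ∀ x, 0 ≤ χ x := fun x => Finset.prod_nonneg fun j _ => cutFn_nonneg _ _ _ _
  have hχle1 : ∀ x, χ x ≤ 1 := fun x =>
    Finset.prod_le_one (fun j _ => cutFn_nonneg _ _ _ _) (fun j _ => cutFn_le_one _ _ _ _)
  have hnotQ : ∀ x : Fin n → ℝ, x ∉ Q → ∃ j, x j ≤ a j ∨ a j + L ≤ x j := by
    intro x hx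
    rw [hQdef, Set.mem_univ_pi] at hx
    push_neg at hx
    obtain ⟨j, hj⟩ := hx
    rw [Set.mem_Icc, not_and_or] at hj
    refine ⟨j, ?_⟩
    rcases hj with hj | hj
    · push_neg at hj
      exact Or.inl hj.le
    · push_neg at hj
      exact Or.inr hj.le
  have hχQ0 : ∀ x, x ∉ Q → χ x = 0 := by
    intro x hx
    obtain ⟨j, hj⟩ := hnotQ x hx
    exact Finset.prod_eq_zero (Finset.mem_univ j) (cutFn_eq_zero hδ hj)
  have hDχQ0 : ∀ i x, x ∉ Q → Dχ i x = 0 := by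
    intro i x hx
    obtain ⟨j, hj⟩ := hnotQ x hx
    rcases eq_or_ne j i with rfl | hne
    · simp only [hDχdef]
      rw [cutFn'_eq_zero_out hδ hj, zero_mul]
    · simp only [hDχdef]
      rw [Finset.prod_eq_zero (Finset.mem_erase.mpr ⟨hne, Finset.mem_univ j⟩)
        (cutFn_eq_zero hδ hj), mul_zero]
  have hχline : ∀ (i : Fin n) (x : Fin n → ℝ),
      HasLineDerivAt ℝ χ (Dχ i x) x (Pi.single i 1) := by
    intro i x
    suffices h : HasDerivAt (fun t : ℝ => χ (x + t • (Pi.single i 1 : Fin n → ℝ)))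
        (Dχ i x) (0 : ℝ) from h
    have hfun : (fun t : ℝ => χ (x + t • (Pi.single i 1 : Fin n → ℝ))) =
        fun t => cutFn (a i) δ L (x i + t) *
          ∏ j ∈ Finset.univ.erase i, cutFn (a j) δ L (x j) := by
      funext t
      simp only [hχdef]
      rw [← Finset.mul_prod_erase Finset.univ _ (Finset.mem_univ i)]
      have h1 : (x + t • (Pi.single i 1 : Fin n → ℝ)) i = x i + t := by
        simp only [Pi.add_apply, Pi.smul_apply, Pi.single_eq_same, smul_eq_mul, mul_one]
      have h2 : ∀ j ∈ Finset.univ.erase i,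
          cutFn (a j) δ L ((x + t • (Pi.single i 1 : Fin n → ℝ)) j) = cutFn (a j) δ L (x j) := by
        intro j hj
        have hxj : (x + t • (Pi.single i 1 : Fin n → ℝ)) j = x j := by
          simp only [Pi.add_apply, Pi.smul_apply,
            Pi.single_eq_of_ne (Finset.ne_of_mem_erase hj), smul_eq_mul, mul_zero, add_zero]
        rw [hxj]
      rw [h1, Finset.prod_congr rfl h2]
    rw [hfun]
    have h2 : HasDerivAt (fun t : ℝ => x i + t) 1 (0:ℝ) := by
      simpa using (hasDerivAt_id (0:ℝ)).const_add (x i)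
    have h1 : HasDerivAt (fun t : ℝ => cutFn (a i) δ L (x i + t))
        (cutFn' (a i) δ L (x i)) 0 := by
      have := (cutFn_hasDerivAt (a i) L hδ (x i + 0)).comp (0:ℝ) h2
      simpa [Function.comp_def] using this
    simpa [hDχdef] using h1.mul_const (∏ j ∈ Finset.univ.erase i, cutFn (a j) δ L (x j))
  -- continuity of u, Γ on U
  have hucont : ContinuousOn u U := hu.continuousOn
  have hfdu : ContinuousOn (fderiv ℝ u) U := hu.continuousOn_fderiv_of_isOpen hU le_rfl
  set Du : Fin n → (Fin n → ℝ) → (Fin M → ℂ) := fun i x => fderiv ℝ u x (Pi.single i 1)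
    with hDudef
  have hDucont : ∀ i, ContinuousOn (Du i) U := fun i => hfdu.clm_apply continuousOn_const
  have hΓeq : ∀ x, Γ x = ∑ i, Lmap i (Du i x) := by
    intro x
    rw [hΓdef, hDudef, hLmapdef]
    simp only [firstOrderOp]
    apply Finset.sum_congr rfl
    intro i _
    simp [Matrix.mulVecLin_apply]
  have hΓcont : ContinuousOn Γ U := by
    have h : ContinuousOn (fun x => ∑ i, Lmap i (Du i x)) U :=
      continuousOn_finset_sum _ (fun i _ => (Lmap i).continuous.comp_continuousOn (hDucont i))
    exact h.congr (fun x _ => hΓeq x)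
  -- integrabilities
  have hIu : IntegrableOn u Q := (hucont.mono hQU').integrableOn_compact hQc
  have hIΓ : IntegrableOn Γ Q := (hΓcont.mono hQU').integrableOn_compact hQc
  have hIup : IntegrableOn (fun x => ‖u x‖ ^ p) Q :=
    (((hucont.mono hQU').norm).rpow_const (fun x _ => Or.inr hp0.le)).integrableOn_compact hQc
  have hIΓp : IntegrableOn (fun x => ‖Γ x‖ ^ p) Q :=
    (((hΓcont.mono hQU').norm).rpow_const (fun x _ => Or.inr hp0.le)).integrableOn_compact hQc
  obtain ⟨Cu, hCu⟩ := hQc.exists_bound_of_continuousOn (hucont.mono hQU')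
  obtain ⟨CΓ, hCΓ⟩ := hQc.exists_bound_of_continuousOn (hΓcont.mono hQU')
  -- the layer sets
  set S : Fin n → Set (Fin n → ℝ) :=
    fun i => Q ∩ {x | x i ≤ a i + δ ∨ a i + L - δ ≤ x i} with hSdef
  have hSm : ∀ i, MeasurableSet (S i) := fun i =>
    hQm.inter ((measurableSet_le (measurable_pi_apply i) measurable_const).union
      (measurableSet_le measurable_const (measurable_pi_apply i)))
  have hSsubQ : ∀ i, S i ⊆ Q := fun i => Set.inter_subset_left
  have hSfin : ∀ i, volume (S i) ≠ ⊤ := fun i =>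
    fun h => hQfin (top_le_iff.mp (h ▸ measure_mono (hSsubQ i)))
  have hSvol : ∀ i, (volume (S i)).toReal ≤ 2 * (δ * L ^ (n-1)) := by
    intro i
    set B1 : Set (Fin n → ℝ) :=
      Set.pi Set.univ (fun j => Set.Icc (a j) (a j + if j = i then δ else L)) with hB1
    set b2 : Fin n → ℝ := fun j => if j = i then a i + L - δ else a j with hb2
    set B2 : Set (Fin n → ℝ) :=
      Set.pi Set.univ (fun j => Set.Icc (b2 j) (b2 j + if j = i then δ else L)) with hB2
    have hsub : S i ⊆ B1 ∪ B2 := by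
      intro x hx
      obtain ⟨hxQ, hcase⟩ := hx
      rw [hQdef, Set.mem_univ_pi] at hxQ
      rcases hcase with h | h
      · left
        rw [hB1, Set.mem_univ_pi]
        intro j
        have hxj := hxQ j
        rw [Set.mem_Icc] at hxj ⊢
        by_cases hji : j = i
        · subst hji
          rw [if_pos rfl]
          exact ⟨hxj.1, h⟩
        · rw [if_neg hji]
          exact hxj
      · right
        rw [hB2, Set.mem_univ_pi]
        intro j
        have hxj := hxQ j
        rw [Set.mem_Icc] at hxj ⊢
        simp only [hb2]
        by_cases hji : j = i
        · subst hji
          rw [if_pos rfl, if_pos rfl]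
          exact ⟨h, by linarith [hxj.2]⟩
        · rw [if_neg hji, if_neg hji]
          exact hxj
    have hvB1 : (volume B1).toReal = δ * L ^ (n-1) := by
      rw [hB1]; exact vol_box_toReal i a δ L hδ.le hL.le
    have hvB2 : (volume B2).toReal = δ * L ^ (n-1) := by
      rw [hB2]; exact vol_box_toReal i b2 δ L hδ.le hL.le
    have hB1fin : volume B1 ≠ ⊤ := by
      rw [hB1, Set.pi_univ_Icc]; exact isCompact_Icc.measure_ne_top
    have hB2fin : volume B2 ≠ ⊤ := by
      rw [hB2, Set.pi_univ_Icc]; exact isCompact_Icc.measure_ne_top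
    have hle : volume (S i) ≤ volume B1 + volume B2 :=
      le_trans (measure_mono hsub) (measure_union_le _ _)
    calc (volume (S i)).toReal ≤ (volume B1 + volume B2).toReal :=
          ENNReal.toReal_mono (by rw [ENNReal.add_ne_top]; exact ⟨hB1fin, hB2fin⟩) hle
      _ = δ * L ^ (n-1) + δ * L ^ (n-1) := by
          rw [ENNReal.toReal_add hB1fin hB2fin, hvB1, hvB2]
      _ = 2 * (δ * L ^ (n-1)) := by ring
  -- pointwise bound on Dχ
  have hDχle : ∀ i x, |Dχ i x| ≤ (2 * Kc / δ) * Set.indicator (S i) (fun _ => (1:ℝ)) x := by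
    intro i x
    by_cases hxS : x ∈ S i
    · rw [Set.indicator_of_mem hxS, mul_one]
      simp only [hDχdef]
      rw [abs_mul]
      have h1 := abs_cutFn'_le (a i) L hδ (x i)
      have h2 : |∏ j ∈ Finset.univ.erase i, cutFn (a j) δ L (x j)| ≤ 1 := by
        rw [abs_of_nonneg (Finset.prod_nonneg fun j _ => cutFn_nonneg _ _ _ _)]
        exact Finset.prod_le_one (fun j _ => cutFn_nonneg _ _ _ _)
          (fun j _ => cutFn_le_one _ _ _ _)
      calc |cutFn' (a i) δ L (x i)| * |∏ j ∈ Finset.univ.erase i, cutFn (a j) δ L (x j)|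
          ≤ (2 * Kc / δ) * 1 :=
            mul_le_mul h1 h2 (abs_nonneg _) (by positivity)
        _ = 2 * Kc / δ := mul_one _
    · rw [Set.indicator_of_notMem hxS, mul_zero]
      have h0 : Dχ i x = 0 := by
        by_cases hxQ : x ∈ Q
        · have hmid : ¬(x i ≤ a i + δ ∨ a i + L - δ ≤ x i) := fun h => hxS ⟨hxQ, h⟩
          push_neg at hmid
          simp only [hDχdef]
          rw [cutFn'_eq_zero_mid hδ hmid.1.le hmid.2.le, zero_mul]
        · exact hDχQ0 i x hxQ
      rw [h0, abs_zero]
  have hχlayer : ∀ x ∈ Q, 1 - χ x ≤ ∑ i, Set.indicator (S i) (fun _ => (1:ℝ)) x := by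
    intro x hxQ
    have h1 : 1 - χ x ≤ ∑ j, (1 - cutFn (a j) δ L (x j)) := by
      rw [hχdef]
      exact one_sub_prod_le_sum Finset.univ _ (fun j _ => cutFn_nonneg _ _ _ _)
        (fun j _ => cutFn_le_one _ _ _ _)
    apply le_trans h1
    apply Finset.sum_le_sum
    intro j _
    by_cases hxS : x ∈ S j
    · rw [Set.indicator_of_mem hxS]
      linarith [cutFn_nonneg (a j) δ L (x j)]
    · rw [Set.indicator_of_notMem hxS]
      have hm : ¬(x j ≤ a j + δ ∨ a j + L - δ ≤ x j) := fun h => hxS ⟨hxQ, h⟩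
      push_neg at hm
      rw [cutFn_eq_one hδ hm.1.le hm.2.le]
      norm_num
  clear_value η g χ Dχ
  -- Hölder on the layer sets
  have hkey : ∀ (i : Fin n) {E' : Type} [NormedAddCommGroup E'] (v : (Fin n → ℝ) → E') (Cv : ℝ),
      ContinuousOn v Q → (∀ x ∈ Q, ‖v x‖ ≤ Cv) → IntegrableOn (fun x => ‖v x‖ ^ p) Q →
      ∫ x in S i, ‖v x‖ ≤ (2 * (δ * L ^ (n-1))) ^ (1/p') * (∫ x in Q, ‖v x‖ ^ p) ^ (1/p) := by
    intro i E' instE v Cv hv hbd hvp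
    have h1 : ∫ x in S i, ‖v x‖ ≤
        ((volume (S i)).toReal) ^ (1/p') * (∫ x in S i, ‖v x‖ ^ p) ^ (1/p) :=
      norm_setIntegral_le_holder volume (hSm i) (hSfin i) v hpq Cv
        (fun x hx => hbd x (hSsubQ i hx))
        ((hv.mono (hSsubQ i)).aestronglyMeasurable (hSm i))
    apply le_trans h1
    have h2 : (∫ x in S i, ‖v x‖ ^ p) ≤ ∫ x in Q, ‖v x‖ ^ p :=
      setIntegral_mono_set hvp
        (Filter.Eventually.of_forall fun x => Real.rpow_nonneg (norm_nonneg _) _)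
        ((hSsubQ i).eventuallyLE)
    apply mul_le_mul
    · exact Real.rpow_le_rpow ENNReal.toReal_nonneg (hSvol i) (by positivity)
    · apply Real.rpow_le_rpow ?_ h2 (by positivity)
      exact setIntegral_nonneg (hSm i) (fun x _ => Real.rpow_nonneg (norm_nonneg _) _)
    · exact Real.rpow_nonneg
        (setIntegral_nonneg (hSm i) (fun x _ => Real.rpow_nonneg (norm_nonneg _) _)) _
    · exact Real.rpow_nonneg (by positivity) _
  -- integration by parts localized to Q
  have hibpQ : ∀ i, ∫ x in Q, χ x • Du i x = - ∫ x in Q, Dχ i x • u x := by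
    intro i
    obtain ⟨Dg, hDgdef⟩ : ∃ Dg : (Fin n → ℝ) → (Fin M → ℂ),
        Dg = fun x => fderiv ℝ g x ((Pi.single i 1 : Fin n → ℝ)) := ⟨_, rfl⟩
    have hDgcont : Continuous Dg := by
      rw [hDgdef]
      exact (hgC.continuous_fderiv one_ne_zero).clm_apply continuous_const
    have hint1 : Integrable (fun x => (ContinuousLinearMap.lsmul ℝ ℝ) (Dχ i x) (g x)) volume := by
      simp only [ContinuousLinearMap.lsmul_apply]
      exact ((hDχcont i).smul hgcont).integrable_of_hasCompactSupport
        (HasCompactSupport.intro hFBc fun x hx => by rw [Pi.smul_apply', hg0 x hx, smul_zero])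
    have hint2 : Integrable (fun x => (ContinuousLinearMap.lsmul ℝ ℝ) (χ x) (Dg x)) volume := by
      simp only [ContinuousLinearMap.lsmul_apply]
      exact (hχcont.smul hDgcont).integrable_of_hasCompactSupport
        (HasCompactSupport.intro hQc fun x hx => by rw [Pi.smul_apply', hχQ0 x hx, zero_smul])
    have hint3 : Integrable (fun x => (ContinuousLinearMap.lsmul ℝ ℝ) (χ x) (g x)) volume := by
      simp only [ContinuousLinearMap.lsmul_apply]
      exact (hχcont.smul hgcont).integrable_of_hasCompactSupport
        (HasCompactSupport.intro hQc fun x hx => by rw [Pi.smul_apply', hχQ0 x hx, zero_smul])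
    have hgdiff : ∀ x, HasLineDerivAt ℝ g (Dg x) x (Pi.single i 1) := by
      intro x
      rw [hDgdef]
      exact ((hgC.differentiable one_ne_zero) x).hasFDerivAt.hasLineDerivAt _
    have H := integral_bilinear_hasLineDerivAt_right_eq_neg_left_of_integrable
      (μ := volume) (B := ContinuousLinearMap.lsmul ℝ ℝ) hint1 hint2 hint3 (fun x _ => hχline i x) (fun x _ => hgdiff x)
    simp only [ContinuousLinearMap.lsmul_apply] at H
    calc ∫ x in Q, χ x • Du i x
        = ∫ x in Q, χ x • Dg x := by
          apply setIntegral_congr_fun hQm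
          intro x hx
          simp only [hDudef, hDgdef]
          rw [hgderiv x hx]
      _ = ∫ x, χ x • Dg x :=
          setIntegral_eq_integral_of_forall_compl_eq_zero
            (fun x hx => by rw [hχQ0 x hx, zero_smul])
      _ = - ∫ x, Dχ i x • g x := H
      _ = - ∫ x in Q, Dχ i x • u x := by
          congr 1
          rw [← setIntegral_eq_integral_of_forall_compl_eq_zero
            (f := fun x => Dχ i x • g x) (fun x hx => by
              show Dχ i x • g x = 0
              rw [hDχQ0 i x hx, zero_smul])]
          apply setIntegral_congr_fun hQm
          intro x hx
          show Dχ i x • g x = Dχ i x • u x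
          rw [hgQ x hx]
  -- split
  have hIχDu : ∀ i, IntegrableOn (fun x => χ x • Du i x) Q := fun i =>
    (hχcont.continuousOn.smul ((hDucont i).mono hQU')).integrableOn_compact hQc
  have hIDχu : ∀ i, IntegrableOn (fun x => Dχ i x • u x) Q := fun i =>
    ((hDχcont i).continuousOn.smul (hucont.mono hQU')).integrableOn_compact hQc
  have hsplit : ∫ x in Q, Γ x = (∫ x in Q, χ x • Γ x) + ∫ x in Q, (1 - χ x) • Γ x := by
    rw [← integral_add (f := fun x => χ x • Γ x) (g := fun x => (1 - χ x) • Γ x) ((hχcont.continuousOn.smul (hΓcont.mono hQU')).integrableOn_compact hQc)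
      (((continuous_const.sub hχcont).continuousOn.smul
        (hΓcont.mono hQU')).integrableOn_compact hQc)]
    apply setIntegral_congr_fun hQm
    intro x _
    show Γ x = χ x • Γ x + (1 - χ x) • Γ x
    rw [← add_smul]
    have : χ x + (1 - χ x) = 1 := by ring
    rw [this, one_smul]
  have hterm1 : ∫ x in Q, χ x • Γ x = - ∑ i, Lmap i (∫ x in Q, Dχ i x • u x) := by
    have e1 : ∫ x in Q, χ x • Γ x = ∑ i, ∫ x in Q, Lmap i (χ x • Du i x) := by
      rw [← integral_finset_sum]
      · apply setIntegral_congr_fun hQm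
        intro x _
        show χ x • Γ x = ∑ i, Lmap i (χ x • Du i x)
        rw [hΓeq x, Finset.smul_sum]
        exact Finset.sum_congr rfl (fun i _ => (map_smul (Lmap i) (χ x) (Du i x)).symm)
      · intro i _
        exact ((Lmap i).continuous.comp_continuousOn
          (hχcont.continuousOn.smul ((hDucont i).mono hQU'))).integrableOn_compact hQc
    rw [e1]
    rw [Finset.sum_congr rfl (fun i _ =>
      (ContinuousLinearMap.integral_comp_comm (Lmap i) (hIχDu i)).trans
        (by rw [hibpQ i, map_neg]))]
    rw [← Finset.sum_neg_distrib]
  -- bound on each IBP term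
  have hbound1 : ∀ i, ‖∫ x in Q, Dχ i x • u x‖ ≤
      (2 * Kc / δ) * ((2 * (δ * L ^ (n-1))) ^ (1/p') * (∫ x in Q, ‖u x‖ ^ p) ^ (1/p)) := by
    intro i
    have c1 : ‖∫ x in Q, Dχ i x • u x‖ ≤ ∫ x in Q, ‖Dχ i x • u x‖ :=
      norm_integral_le_integral_norm _
    have c2 : ∫ x in Q, ‖Dχ i x • u x‖ ≤
        ∫ x in Q, (2 * Kc / δ) * Set.indicator (S i) (fun x => ‖u x‖) x := by
      apply setIntegral_mono_on ((hIDχu i).norm) ((hIu.norm.indicator (hSm i)).const_mul _) hQm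
      intro x hx
      rw [norm_smul, Real.norm_eq_abs]
      by_cases hxS : x ∈ S i
      · rw [Set.indicator_of_mem hxS]
        have hd := hDχle i x
        rw [Set.indicator_of_mem hxS, mul_one] at hd
        exact mul_le_mul_of_nonneg_right hd (norm_nonneg _)
      · rw [Set.indicator_of_notMem hxS, mul_zero]
        have hd := hDχle i x
        rw [Set.indicator_of_notMem hxS, mul_zero] at hd
        have h0 : |Dχ i x| = 0 := le_antisymm hd (abs_nonneg _)
        rw [h0, zero_mul]
    have c3 : ∫ x in Q, (2 * Kc / δ) * Set.indicator (S i) (fun x => ‖u x‖) x =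
        (2 * Kc / δ) * ∫ x in S i, ‖u x‖ := by
      rw [integral_const_mul]
      congr 1
      rw [setIntegral_indicator (hSm i), Set.inter_eq_self_of_subset_right (hSsubQ i)]
    calc ‖∫ x in Q, Dχ i x • u x‖ ≤ _ := c1
      _ ≤ _ := c2
      _ = (2 * Kc / δ) * ∫ x in S i, ‖u x‖ := c3
      _ ≤ (2 * Kc / δ) * ((2 * (δ * L ^ (n-1))) ^ (1/p') * (∫ x in Q, ‖u x‖ ^ p) ^ (1/p)) := by
          apply mul_le_mul_of_nonneg_left (hkey i u Cu (hucont.mono hQU') hCu hIup)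
          positivity
  have hbound2 : ‖∫ x in Q, (1 - χ x) • Γ x‖ ≤
      n * ((2 * (δ * L ^ (n-1))) ^ (1/p') * (∫ x in Q, ‖Γ x‖ ^ p) ^ (1/p)) := by
    have c1 : ‖∫ x in Q, (1 - χ x) • Γ x‖ ≤ ∫ x in Q, ‖(1 - χ x) • Γ x‖ :=
      norm_integral_le_integral_norm _
    have c2 : ∫ x in Q, ‖(1 - χ x) • Γ x‖ ≤
        ∫ x in Q, ∑ i, Set.indicator (S i) (fun x => ‖Γ x‖) x := by
      apply setIntegral_mono_on
        ((((continuous_const.sub hχcont).continuousOn.smul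
          (hΓcont.mono hQU')).integrableOn_compact hQc).norm)
        (integrable_finset_sum _ (fun i _ => hIΓ.norm.indicator (hSm i))) hQm
      intro x hx
      show ‖(1 - χ x) • Γ x‖ ≤ _
      rw [norm_smul, Real.norm_eq_abs, abs_of_nonneg (by linarith [hχle1 x] : (0:ℝ) ≤ 1 - χ x)]
      calc (1 - χ x) * ‖Γ x‖
          ≤ (∑ i, Set.indicator (S i) (fun _ => (1:ℝ)) x) * ‖Γ x‖ :=
            mul_le_mul_of_nonneg_right (hχlayer x hx) (norm_nonneg _)
        _ = ∑ i, Set.indicator (S i) (fun x => ‖Γ x‖) x := by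
            rw [Finset.sum_mul]
            apply Finset.sum_congr rfl
            intro i _
            by_cases hxS : x ∈ S i
            · rw [Set.indicator_of_mem hxS, Set.indicator_of_mem hxS, one_mul]
            · rw [Set.indicator_of_notMem hxS, Set.indicator_of_notMem hxS, zero_mul]
    have c3 : ∫ x in Q, ∑ i, Set.indicator (S i) (fun x => ‖Γ x‖) x =
        ∑ i, ∫ x in S i, ‖Γ x‖ := by
      rw [integral_finset_sum _ (fun i _ => hIΓ.norm.indicator (hSm i))]
      apply Finset.sum_congr rfl
      intro i _
      rw [setIntegral_indicator (hSm i), Set.inter_eq_self_of_subset_right (hSsubQ i)]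
    have c4 : ∑ i, ∫ x in S i, ‖Γ x‖ ≤
        n * ((2 * (δ * L ^ (n-1))) ^ (1/p') * (∫ x in Q, ‖Γ x‖ ^ p) ^ (1/p)) := by
      calc ∑ i, ∫ x in S i, ‖Γ x‖
          ≤ ∑ _i : Fin n, (2 * (δ * L ^ (n-1))) ^ (1/p') * (∫ x in Q, ‖Γ x‖ ^ p) ^ (1/p) :=
            Finset.sum_le_sum (fun i _ => hkey i Γ CΓ (hΓcont.mono hQU') hCΓ hIΓp)
        _ = n * ((2 * (δ * L ^ (n-1))) ^ (1/p') * (∫ x in Q, ‖Γ x‖ ^ p) ^ (1/p)) := by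
            rw [Finset.sum_const, Finset.card_univ, Fintype.card_fin, nsmul_eq_mul]
    exact le_trans c1 (le_trans c2 (le_trans (le_of_eq c3) c4))
  -- final assembly
  calc ‖∫ x in Q, Γ x‖
      ≤ ‖∫ x in Q, χ x • Γ x‖ + ‖∫ x in Q, (1 - χ x) • Γ x‖ := by
        rw [hsplit]; exact norm_add_le _ _
    _ ≤ (∑ i, ‖Lmap i‖) * (2 * Kc / δ) *
          ((2 * (δ * L ^ (n-1))) ^ (1/p') * (∫ x in Q, ‖u x‖ ^ p) ^ (1/p))
        + n * ((2 * (δ * L ^ (n-1))) ^ (1/p') * (∫ x in Q, ‖Γ x‖ ^ p) ^ (1/p)) := by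
        apply add_le_add ?_ hbound2
        rw [hterm1, norm_neg]
        calc ‖∑ i, Lmap i (∫ x in Q, Dχ i x • u x)‖
            ≤ ∑ i, ‖Lmap i (∫ x in Q, Dχ i x • u x)‖ := norm_sum_le _ _
          _ ≤ ∑ i, ‖Lmap i‖ * ((2 * Kc / δ) *
              ((2 * (δ * L ^ (n-1))) ^ (1/p') * (∫ x in Q, ‖u x‖ ^ p) ^ (1/p))) :=
              Finset.sum_le_sum (fun i _ => le_trans ((Lmap i).le_opNorm _)
                (mul_le_mul_of_nonneg_left (hbound1 i) (norm_nonneg _)))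
          _ = (∑ i, ‖Lmap i‖) * (2 * Kc / δ) *
              ((2 * (δ * L ^ (n-1))) ^ (1/p') * (∫ x in Q, ‖u x‖ ^ p) ^ (1/p)) := by
              rw [← Finset.sum_mul, mul_assoc]


/-- `L^p` averaging estimate for first-order constant-coefficient operators:
`|⨍_Q Γu|^p ≲ ℓ(Q)^{1−p} (⨍_Q |u|^p)^{1/p'} (⨍_Q |Γu|^p)^{1/p}`, with constant depending
only on `p`, `n` and `Γ₀`. -/
theorem lp_averaging_first_order (n M N : ℕ)
    (c : Fin n → Matrix (Fin N) (Fin M) ℂ)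
    (p p' : ℝ) (hp : 1 < p) (hpq : 1 / p + 1 / p' = 1) :
    ∃ C : ℝ, 0 < C ∧
      ∀ (a : Fin n → ℝ) (L : ℝ), 0 < L →
      ∀ (U : Set (Fin n → ℝ)), IsOpen U →
        closure (Set.pi Set.univ (fun i => Set.Icc (a i) (a i + L))) ⊆ U →
      ∀ u : (Fin n → ℝ) → (Fin M → ℂ), ContDiffOn ℝ 1 u U →
        let Q := Set.pi Set.univ (fun i => Set.Icc (a i) (a i + L))
        ‖((volume Q).toReal)⁻¹ • ∫ x in Q, firstOrderOp n M N c u x‖ ^ p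
          ≤ C * L ^ (1 - p) *
            (((volume Q).toReal)⁻¹ * ∫ x in Q, ‖u x‖ ^ p) ^ (1 / p') *
            (((volume Q).toReal)⁻¹ * ∫ x in Q, ‖firstOrderOp n M N c u x‖ ^ p) ^ (1 / p) := by
  classical
  have hp0 : 0 < p := lt_trans one_pos hp
  have hp'0 : 0 < p' := by
    by_contra h
    push_neg at h
    have h2 : 1/p' ≤ 0 := div_nonpos_of_nonneg_of_nonpos zero_le_one h
    have h1 : 1/p < 1 := by rw [div_lt_one hp0]; exact hp
    linarith
  have hpq' : Real.HolderConjugate p p' := Real.holderConjugate_iff.mpr ⟨hp, by rw [← one_div, ← one_div]; exact hpq⟩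
  set CL : ℝ := ∑ i, ‖(LinearMap.toContinuousLinearMap (((c i).mulVecLin).restrictScalars ℝ) :
      (Fin M → ℂ) →L[ℝ] (Fin N → ℂ))‖ with hCLdef
  have hCL : 0 ≤ CL := Finset.sum_nonneg fun i _ => norm_nonneg _
  set D : ℝ := 2 * Kc * CL + n with hDdef
  have hD : 0 ≤ D := by
    rw [hDdef]
    have := Kc_nonneg
    positivity
  have hCpos : (0:ℝ) < 2^(p-1) * D^p + 1 := by
    have h1 : (0:ℝ) < 2^(p-1) := Real.rpow_pos_of_pos two_pos _
    have h2 : (0:ℝ) ≤ D^p := Real.rpow_nonneg hD _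
    nlinarith
  refine ⟨2^(p-1) * D^p + 1, hCpos, ?_⟩
  intro a L hL U hU hclU u hu
  intro Q
  have hQdef : Q = Set.pi Set.univ (fun i => Set.Icc (a i) (a i + L)) := rfl
  rw [hQdef]
  set Qc : Set (Fin n → ℝ) := Set.pi Set.univ (fun i => Set.Icc (a i) (a i + L)) with hQcdef
  have hQIcc : Qc = Set.Icc a (fun i => a i + L) := Set.pi_univ_Icc a _
  have hQm : MeasurableSet Qc := by rw [hQIcc]; exact measurableSet_Icc
  have hQU : Qc ⊆ U := subset_closure.trans hclU
  have hmaster := fun (δ : ℝ) (hδ : 0 < δ) =>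
    master_bound n M N c p p' hpq' a L hL U hU hQU u hu δ hδ
  simp only [← hCLdef] at hmaster
  set J : Fin N → ℂ := ∫ x in Qc, firstOrderOp n M N c u x with hJdef
  set α : ℝ := ∫ x in Qc, ‖u x‖ ^ p with hαdef
  set β : ℝ := ∫ x in Qc, ‖firstOrderOp n M N c u x‖ ^ p with hβdef
  have hα0 : 0 ≤ α := by
    rw [hαdef]
    exact setIntegral_nonneg hQm (fun x _ => Real.rpow_nonneg (norm_nonneg _) _)
  have hβ0 : 0 ≤ β := by
    rw [hβdef]
    exact setIntegral_nonneg hQm (fun x _ => Real.rpow_nonneg (norm_nonneg _) _)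
  have hVol : (volume Qc).toReal = L ^ n := by
    rw [hQIcc, Real.volume_Icc_pi_toReal (fun i => by dsimp; linarith)]
    simp
  have hVpos : (0:ℝ) < L ^ n := pow_pos hL n
  rw [hVol]
  have hRHS : 0 ≤ (2^(p-1) * D^p + 1) * L^(1-p) *
      ((L^n : ℝ)⁻¹ * α)^(1/p') * ((L^n : ℝ)⁻¹ * β)^(1/p) := by
    have h1 : (0:ℝ) ≤ (L^n : ℝ)⁻¹ * α := mul_nonneg (inv_nonneg.mpr hVpos.le) hα0
    have h2 : (0:ℝ) ≤ (L^n : ℝ)⁻¹ * β := mul_nonneg (inv_nonneg.mpr hVpos.le) hβ0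
    exact mul_nonneg (mul_nonneg (mul_nonneg hCpos.le (Real.rpow_nonneg hL.le _))
      (Real.rpow_nonneg h1 _)) (Real.rpow_nonneg h2 _)
  have hL2 : (0:ℝ) < L ^ (n-1) := pow_pos hL _
  by_cases hβz : β = 0
  · -- second factor vanishes; show the integral is zero by letting δ → ∞
    have hβp : β^(1/p) = 0 := by
      rw [hβz, Real.zero_rpow (by positivity : (1:ℝ)/p ≠ 0)]
    have hJ0 : J = 0 := by
      have hn0 : ‖J‖ ≤ 0 := by
        have heq : ∀ δ : ℝ, 0 < δ →
            CL * (2*Kc/δ) * ((2*(δ*L^(n-1)))^(1/p') * α^(1/p))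
              = (CL * (2*Kc) * (2*L^(n-1))^(1/p') * α^(1/p)) * δ^(1/p' - 1) := by
          intro δ hδ
          rw [show (2*(δ*L^(n-1))) = (2*L^(n-1))*δ by ring,
            Real.mul_rpow (by positivity) hδ.le, Real.rpow_sub hδ, Real.rpow_one]
          field_simp [hδ.ne']
        have hlim : Filter.Tendsto
            (fun δ : ℝ => (CL * (2*Kc) * (2*L^(n-1))^(1/p') * α^(1/p)) * δ^(1/p' - 1))
            Filter.atTop (nhds 0) := by
          have h1 : 1/p' - 1 = -(1/p) := by linarith
          rw [h1]
          have h2 := tendsto_rpow_neg_atTop (y := 1/p) (by positivity)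
          simpa using h2.const_mul (CL * (2*Kc) * (2*L^(n-1))^(1/p') * α^(1/p))
        apply ge_of_tendsto hlim
        filter_upwards [Filter.eventually_gt_atTop 0] with δ hδ
        have hm := hmaster δ hδ
        rw [hβp, mul_zero, mul_zero, add_zero, heq δ hδ] at hm
        exact hm
      exact norm_le_zero_iff.mp hn0
    rw [hJ0, smul_zero, norm_zero, Real.zero_rpow hp0.ne']
    exact hRHS
  · by_cases hαz : α = 0
    · -- first factor vanishes; let δ → 0⁺
      have hαp : α^(1/p) = 0 := by
        rw [hαz, Real.zero_rpow (by positivity : (1:ℝ)/p ≠ 0)]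
      have hJ0 : J = 0 := by
        have hn0 : ‖J‖ ≤ 0 := by
          have heq : ∀ δ : ℝ, 0 < δ →
              (n:ℝ) * ((2*(δ*L^(n-1)))^(1/p') * β^(1/p))
                = ((n:ℝ) * (2*L^(n-1))^(1/p') * β^(1/p)) * δ^(1/p') := by
            intro δ hδ
            rw [show (2*(δ*L^(n-1))) = (2*L^(n-1))*δ by ring,
              Real.mul_rpow (by positivity) hδ.le]
            ring
          have hlim : Filter.Tendsto
              (fun δ : ℝ => ((n:ℝ) * (2*L^(n-1))^(1/p') * β^(1/p)) * δ^(1/p'))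
              (nhdsWithin 0 (Set.Ioi 0)) (nhds 0) := by
            have h2 : Filter.Tendsto (fun δ : ℝ => δ^(1/p'))
                (nhdsWithin 0 (Set.Ioi 0)) (nhds 0) := by
              have h3 : ContinuousAt (fun δ : ℝ => δ^(1/p')) 0 :=
                Real.continuousAt_rpow_const 0 (1/p') (Or.inr (by positivity))
              have h4 := h3.continuousWithinAt (s := Set.Ioi 0)
              have h5 : (0:ℝ)^(1/p') = 0 := Real.zero_rpow (by positivity)
              have h6 : Filter.Tendsto (fun δ : ℝ => δ^(1/p'))
                  (nhdsWithin 0 (Set.Ioi 0)) (nhds ((0:ℝ)^(1/p'))) := h4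
              rwa [h5] at h6
            simpa using h2.const_mul ((n:ℝ) * (2*L^(n-1))^(1/p') * β^(1/p))
          apply ge_of_tendsto hlim
          filter_upwards [self_mem_nhdsWithin] with δ hδ
          have hm := hmaster δ hδ
          rw [hαp, mul_zero, mul_zero, zero_add, heq δ hδ] at hm
          exact hm
        exact norm_le_zero_iff.mp hn0
      rw [hJ0, smul_zero, norm_zero, Real.zero_rpow hp0.ne']
      exact hRHS
    · -- main case
      have hαpos : 0 < α := hα0.lt_of_ne (Ne.symm hαz)
      have hβpos : 0 < β := hβ0.lt_of_ne (Ne.symm hβz)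
      have hn1 : 1 ≤ n := by
        by_contra hn
        push_neg at hn
        have hn0 : n = 0 := by omega
        apply hβz
        rw [hβdef]
        have hzero : ∀ x : Fin n → ℝ, firstOrderOp n M N c u x = 0 := by
          subst hn0
          intro x
          simp [firstOrderOp]
        have : ∀ x : Fin n → ℝ, ‖firstOrderOp n M N c u x‖ ^ p = 0 := by
          intro x
          rw [hzero x, norm_zero, Real.zero_rpow hp0.ne']
        simp only [this]
        simp
      have hδpos : 0 < α^(1/p)/β^(1/p) :=
        div_pos (Real.rpow_pos_of_pos hαpos _) (Real.rpow_pos_of_pos hβpos _)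
      have hm := hmaster _ hδpos
      rw [T_eq p p' CL Kc (n:ℝ) (L^(n-1)) α β hp hpq hL2 hαpos hβpos, ← hDdef] at hm
      calc ‖(L^n : ℝ)⁻¹ • J‖ ^ p = ((L^n : ℝ)⁻¹ * ‖J‖) ^ p := by
            rw [norm_smul, Real.norm_eq_abs, abs_of_nonneg (inv_nonneg.mpr hVpos.le)]
        _ ≤ ((L^n : ℝ)⁻¹ * ((2*L^(n-1))^(1/p') * D *
              ((α^(1/p))^(1/p') * (β^(1/p))^(1/p)))) ^ p :=
            Real.rpow_le_rpow (mul_nonneg (inv_nonneg.mpr hVpos.le) (norm_nonneg _))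
              (mul_le_mul_of_nonneg_left hm (inv_nonneg.mpr hVpos.le)) hp0.le
        _ ≤ (2^(p-1) * D^p + 1) * L^(1-p) *
              ((L^n : ℝ)⁻¹ * α)^(1/p') * ((L^n : ℝ)⁻¹ * β)^(1/p) :=
            final_algebra p p' α β L D _ n hn1 hp hpq hαpos hβpos hL hD
              (le_add_of_nonneg_right zero_le_one)
end
end
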